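/- arXiv:2204.03079 — 5 statements merged into one kernel-verified Lean document; each statement's English description precedes it below -/
import Mathlib

section
/- Every non-discrete subsequential topological space (i.e., every non-discrete subspace of a sequential topological space) is groomed. -/
open Set Filter Topology TopologicalSpace

/-- A set `C` is an (infinite) sequence converging to `p`: it is infinite and
almost contained in every neighborhood of `p`. -/
def IsConvSeqTo {X : Type*} [TopologicalSpace X] (C : Set X) (p : X) : Prop :=
  C.Infinite ∧ ∀ U ∈ nhds p, (C \ U).Finite

/-- A space is non-discrete if some point is not isolated. -/
def NonDiscrete (X : Type*) [TopologicalSpace X] : Prop :=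
  ∃ x : X, ¬ IsOpen ({x} : Set X)

/-- An ideal of subsets: closed under subsets and finite unions, and containing
all finite sets. -/
def IsIdeal {α : Type*} (I : Set (Set α)) : Prop :=
  (∀ A B : Set α, A ⊆ B → B ∈ I → A ∈ I) ∧
  (∀ A ∈ I, ∀ B ∈ I, A ∪ B ∈ I) ∧
  (∀ A : Set α, A.Finite → A ∈ I)

/-- A family `I` is ω-hitting if for every countable family of infinite sets
there is a member of `I` meeting each of them in an infinite set. -/
def OmegaHitting {α : Type*} (I : Set (Set α)) : Prop :=
  ∀ Y : ℕ → Set α, (∀ n, (Y n).Infinite) → ∃ A ∈ I, ∀ n, (Y n ∩ A).Infinite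

/-- An ideal `I` on `α` is tame if for every `I`-positive set `Y`, every
`f : Y → ω` and every ω-hitting ideal `J` on `ω` there is `j ∈ J` whose
`f`-preimage (inside `Y`) is `I`-positive. -/
def Tame {α : Type*} (I : Set (Set α)) : Prop :=
  ∀ Y : Set α, Y ∉ I → ∀ f : α → ℕ, ∀ J : Set (Set ℕ),
    IsIdeal J → OmegaHitting J → ∃ j ∈ J, Y ∩ f ⁻¹' j ∉ I

/-- `Y` is entangled if for every point `x`, the ideal
`I_x ↾ Y = {A ⊆ Y : x ∉ closure A}` is ω-hitting (on `Y`). -/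
def Entangled {X : Type*} [TopologicalSpace X] (Y : Set X) : Prop :=
  ∀ x : X, ∀ Z : ℕ → Set X, (∀ n, Z n ⊆ Y ∧ (Z n).Infinite) →
    ∃ A : Set X, A ⊆ Y ∧ x ∉ closure A ∧ ∀ n, (Z n ∩ A).Infinite

/-- A space is groomed if it contains no dense entangled subset. -/
def Groomed (X : Type*) [TopologicalSpace X] : Prop :=
  ¬ ∃ D : Set X, Dense D ∧ Entangled D

/-- An ideal on a group is invariant if it is closed under left and right
translations and under inversion. -/
def InvariantIdeal {G : Type*} [Group G] (I : Set (Set G)) : Prop :=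
  ∀ A ∈ I, ∀ g : G,
    (fun h => g * h) '' A ∈ I ∧ (fun h => h * g) '' A ∈ I ∧ (fun h => h⁻¹) '' A ∈ I

/-- An ideal on a topological group is weakly closed if for every set `A` and
every sequence `C` converging to the identity,
`A ∈ I ↔ A ∪ {x : C·x ⊆* A} ∈ I`. -/
def WeaklyClosed {G : Type*} [Group G] [TopologicalSpace G] (I : Set (Set G)) : Prop :=
  ∀ A C : Set G, IsConvSeqTo C 1 →
    (A ∈ I ↔ A ∪ {x : G | ((fun c => c * x) '' C \ A).Finite} ∈ I)

/-- Alternative (1) of IIA: a countable subfamily of `I` capturing (meeting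
infinitely) every infinite convergent sequence. -/
def CapturesConvSeqs {G : Type*} [TopologicalSpace G] (I : Set (Set G)) : Prop :=
  ∃ S : Set (Set G), S.Countable ∧ S ⊆ I ∧
    ∀ C : Set G, ∀ p : G, IsConvSeqTo C p → ∃ A ∈ S, (C ∩ A).Infinite

/-- Alternative (2) of IIA: a countable family of `I`-positive sets which is an
almost π-network: every non-empty open set contains one of them modulo `I`. -/
def HasAlmostPiNetwork {G : Type*} [TopologicalSpace G] (I : Set (Set G)) : Prop :=
  ∃ H : Set (Set G), H.Countable ∧ (∀ A ∈ H, A ∉ I) ∧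
    ∀ U : Set G, IsOpen U → U.Nonempty → ∃ A ∈ H, A \ U ∈ I

/-- The Invariant Ideal Axiom: for every countable groomed topological group `G`
and every tame, weakly closed, invariant ideal on `G`, one of the two
alternatives holds. -/
def IIA : Prop :=
  ∀ (G : Type) [Group G] [TopologicalSpace G] [IsTopologicalGroup G] [T1Space G]
    [Countable G], Groomed G →
    ∀ I : Set (Set G), IsIdeal I → Tame I → WeaklyClosed I → InvariantIdeal I →
      CapturesConvSeqs I ∨ HasAlmostPiNetwork I

/-- A set is scattered if every nonempty subset has a point isolated in it. -/
def IsScattered {X : Type*} [TopologicalSpace X] (A : Set X) : Prop :=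
  ∀ B ⊆ A, B.Nonempty → ∃ x ∈ B, ∃ U : Set X, IsOpen U ∧ U ∩ B = {x}

/-- A set is closed discrete if it is closed and discrete as a subspace. -/
def IsClosedDiscrete {X : Type*} [TopologicalSpace X] (D : Set X) : Prop :=
  IsClosed D ∧ ∀ x ∈ D, ∃ U : Set X, IsOpen U ∧ U ∩ D = {x}

/-- The ideal of nowhere dense subsets of `X`. -/
def nwdIdeal (X : Type*) [TopologicalSpace X] : Set (Set X) :=
  {A | IsNowhereDense A}

/-- The ideal generated by the compact subsets of `X`. -/
def cptIdeal (X : Type*) [TopologicalSpace X] : Set (Set X) :=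
  {A | ∃ F : Set (Set X), F.Finite ∧ (∀ K ∈ F, IsCompact K) ∧ A ⊆ ⋃₀ F}

/-- The ideal generated by the closed scattered subsets of `X`. -/
def csctIdeal (X : Type*) [TopologicalSpace X] : Set (Set X) :=
  {A | ∃ F : Set (Set X), F.Finite ∧ (∀ K ∈ F, IsClosed K ∧ IsScattered K) ∧ A ⊆ ⋃₀ F}

/-- A set is countably compact: every countable open cover has a finite subcover. -/
def IsCountablyCompactSet {X : Type*} [TopologicalSpace X] (K : Set X) : Prop :=
  ∀ U : ℕ → Set X, (∀ n, IsOpen (U n)) → K ⊆ ⋃ n, U n →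
    ∃ t : Finset ℕ, K ⊆ ⋃ n ∈ t, U n

/-- A `kω`-space: the topology is determined by a countable family of compact sets. -/
def IsKOmega (X : Type*) [TopologicalSpace X] : Prop :=
  ∃ K : ℕ → Set X, (∀ n, IsCompact (K n)) ∧
    ∀ U : Set X, IsOpen U ↔ ∀ n, ∃ V : Set X, IsOpen V ∧ U ∩ K n = V ∩ K n

/-- A `cω`-space: the topology is determined by a countable family of countably
compact sets. -/
def IsCOmega (X : Type*) [TopologicalSpace X] : Prop :=
  ∃ K : ℕ → Set X, (∀ n, IsCountablyCompactSet (K n)) ∧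
    ∀ U : Set X, IsOpen U ↔ ∀ n, ∃ V : Set X, IsOpen V ∧ U ∩ K n = V ∩ K n

/-- A set is dense in itself if it has no points isolated in its subspace topology. -/
def DenseInItself {X : Type*} [TopologicalSpace X] (A : Set X) : Prop :=
  ∀ x ∈ A, x ∈ closure (A \ {x})

/-- A strict vD-network at `x`: a countable family of infinite closed discrete
sets, almost contained in every open neighborhood of `x` member-wise. -/
def StrictVDNetwork {X : Type*} [TopologicalSpace X] (D : Set (Set X)) (x : X) : Prop :=
  D.Countable ∧ (∀ E ∈ D, E.Infinite ∧ IsClosedDiscrete E) ∧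
    ∀ U : Set X, IsOpen U → x ∈ U → ∃ E ∈ D, (E \ U).Finite

/-- A relation `R ⊆ G × G` is large if for all `a b`, `(a,b) ∈ R` or `(a, a·b⁻¹) ∈ R`. -/
def IsLargeRel {G : Type*} [Group G] (R : Set (G × G)) : Prop :=
  ∀ a b : G, (a, b) ∈ R ∨ (a, a * b⁻¹) ∈ R

/-- `R⁻¹[B] = {a : (a,b) ∈ R for some b ∈ B}`. -/
def relPreimage {G : Type*} (R : Set (G × G)) (B : Set G) : Set G :=
  {a | ∃ b ∈ B, (a, b) ∈ R}
lemma seq_main {Y : Type*} [TopologicalSpace Y] [T1Space Y] [SequentialSpace Y]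
    (A : Set Y) {x : Y} (hx : x ∈ closure A) :
    x ∈ A ∨ ∃ S : Set (Set Y), S.Nonempty ∧ S.Countable ∧
      (∀ Z ∈ S, Z ⊆ A ∧ Z.Infinite) ∧
      ∀ B ⊆ A, (∀ Z ∈ S, (B ∩ Z).Infinite) → x ∈ closure B := by
  set P : Set Y := {y | y ∈ A ∨ ∃ S : Set (Set Y), S.Nonempty ∧ S.Countable ∧
      (∀ Z ∈ S, Z ⊆ A ∧ Z.Infinite) ∧
      ∀ B ⊆ A, (∀ Z ∈ S, (B ∩ Z).Infinite) → y ∈ closure B} with hPdef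
  have hsc : IsSeqClosed P := by
    intro u p hu hp
    by_cases hpr : p ∈ Set.range u
    · obtain ⟨n, rfl⟩ := hpr; exact hu n
    by_cases hK : {n : ℕ | u n ∉ A}.Infinite
    · -- infinitely many terms outside A
      right
      have h2 : ∀ n : {n : ℕ // u n ∉ A}, ∃ S : Set (Set Y), S.Nonempty ∧ S.Countable ∧
          (∀ Z ∈ S, Z ⊆ A ∧ Z.Infinite) ∧
          ∀ B ⊆ A, (∀ Z ∈ S, (B ∩ Z).Infinite) → u n ∈ closure B :=
        fun n => (hu n).resolve_left n.2
      choose F hF1 hF2 hF3 hF4 using h2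
      have hKne : Nonempty {n : ℕ // u n ∉ A} := by
        obtain ⟨n, hn⟩ := hK.nonempty; exact ⟨⟨n, hn⟩⟩
      refine ⟨⋃ n, F n, ?_, countable_iUnion hF2, ?_, ?_⟩
      · obtain ⟨n⟩ := hKne
        obtain ⟨Z, hZ⟩ := hF1 n
        exact ⟨Z, mem_iUnion.2 ⟨n, hZ⟩⟩
      · intro Z hZ
        obtain ⟨n, hn⟩ := mem_iUnion.1 hZ
        exact hF3 n Z hn
      · intro B hBA hBhit
        have hcl : ∀ n : {n : ℕ // u n ∉ A}, u n ∈ closure B := fun n =>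
          hF4 n B hBA (fun Z hZ => hBhit Z (mem_iUnion.2 ⟨n, hZ⟩))
        rw [mem_closure_iff]
        intro U hU hpU
        obtain ⟨N, hN⟩ := (hp.eventually (hU.mem_nhds hpU)).exists_forall_of_atTop
        obtain ⟨n, hnK, hnN⟩ := hK.exists_gt N
        have h1 : u n ∈ U := hN n hnN.le
        exact mem_closure_iff.1 (hcl ⟨n, hnK⟩) U hU h1
    · -- cofinitely many terms in A
      have hR : (u '' {n : ℕ | u n ∈ A}).Infinite := by
        by_contra hRfin
        rw [Set.not_infinite] at hRfin
        have hrange : (Set.range u).Finite := by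
          have : Set.range u ⊆ (u '' {n | u n ∈ A}) ∪ (u '' {n | u n ∉ A}) := by
            rintro _ ⟨n, rfl⟩
            by_cases h : u n ∈ A
            · exact Or.inl ⟨n, h, rfl⟩
            · exact Or.inr ⟨n, h, rfl⟩
          exact Set.Finite.subset (hRfin.union ((Set.not_infinite.1 hK).image u)) this
        have hpcl : p ∈ closure (Set.range u) := by
          rw [mem_closure_iff]
          intro U hU hpU
          obtain ⟨N, hN⟩ := (hp.eventually (hU.mem_nhds hpU)).exists_forall_of_atTop
          exact ⟨u N, hN N le_rfl, ⟨N, rfl⟩⟩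
        rw [hrange.isClosed.closure_eq] at hpcl
        exact hpr hpcl
      right
      refine ⟨{u '' {n : ℕ | u n ∈ A}}, ⟨_, rfl⟩, countable_singleton _, ?_, ?_⟩
      · rintro Z rfl
        exact ⟨by rintro _ ⟨n, hn, rfl⟩; exact hn, hR⟩
      · intro B hBA hBhit
        have hBR := hBhit _ rfl
        rw [mem_closure_iff]
        intro U hU hpU
        obtain ⟨N, hN⟩ := (hp.eventually (hU.mem_nhds hpU)).exists_forall_of_atTop
        have hfin : (u '' {n | u n ∈ A}) \ U ⊆ u '' (Set.Iio N) := by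
          rintro y ⟨⟨n, hn, rfl⟩, hyU⟩
          by_contra h
          exact hyU (hN n (le_of_not_gt (fun hlt => h ⟨n, hlt, rfl⟩)))
        have : ((B ∩ u '' {n | u n ∈ A}) \ (u '' (Set.Iio N))).Nonempty :=
          (hBR.diff ((Set.finite_Iio N).image u)).nonempty
        obtain ⟨y, ⟨hyB, hyR⟩, hyN⟩ := this
        have hyU : y ∈ U := by
          by_contra h
          exact hyN (hfin ⟨hyR, h⟩)
        exact ⟨y, hyU, hyB⟩
  have : closure A ⊆ P := closure_minimal (fun y hy => Or.inl hy) hsc.isClosed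
  exact this hx

/-- Every non-discrete subsequential space (i.e. non-discrete
subspace of a sequential space) is groomed. -/
theorem statement0 (Y : Type*) [TopologicalSpace Y] [T1Space Y] [SequentialSpace Y]
    (X : Set Y) (hX : NonDiscrete ↥X) : Groomed ↥X := by
  rintro ⟨D, hDdense, hDent⟩
  obtain ⟨x, hx⟩ := hX
  -- x is in the closure of D \ {x} within ↥X
  have hxc : x ∈ closure (D \ {x}) := by
    by_contra h
    rw [mem_closure_iff] at h
    push_neg at h
    obtain ⟨U, hUopen, hxU, hUem⟩ := h
    have hUD : U ∩ D ⊆ {x} := by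
      rintro z ⟨hzU, hzD⟩
      by_contra hzx
      exact Set.eq_empty_iff_forall_notMem.1 hUem z ⟨hzU, hzD, hzx⟩
    have hU1 : U ⊆ {x} := by
      intro y hy
      have hyc : y ∈ closure (U ∩ D) := hDdense.open_subset_closure_inter hUopen hy
      have := closure_mono hUD hyc
      simpa using this
    have hUeq : U = {x} := hU1.antisymm (Set.singleton_subset_iff.2 hxU)
    exact hx (hUeq ▸ hUopen)
  -- transfer to Y
  have hxcY : (x : Y) ∈ closure (Subtype.val '' (D \ {x})) := closure_subtype.1 hxc
  have hxA : (x : Y) ∉ Subtype.val '' (D \ {x}) := by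
    rintro ⟨d, ⟨hdD, hdx⟩, heq⟩
    exact hdx (Subtype.val_injective heq)
  obtain ⟨S, hSne, hSc, hSm, hSfin⟩ := (seq_main _ hxcY).resolve_left hxA
  obtain ⟨f, hf⟩ := Set.Countable.exists_eq_range hSc hSne
  set Z : ℕ → Set ↥X := fun n => Subtype.val ⁻¹' f n with hZdef
  have hfS : ∀ n, f n ∈ S := fun n => hf ▸ ⟨n, rfl⟩
  have hZD : ∀ n, Z n ⊆ D ∧ (Z n).Infinite := by
    intro n
    have hm := hSm (f n) (hfS n)
    constructor
    · intro y hy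
      obtain ⟨d, ⟨hdD, _⟩, heq⟩ := hm.1 hy
      exact (Subtype.val_injective heq) ▸ hdD
    · exact hm.2.preimage (hm.1.trans (Set.image_subset_range _ _))
  obtain ⟨B, hBD, hBx, hBZ⟩ := hDent x Z hZD
  have hBx' : x ∈ closure B := by
    have h1 : Subtype.val '' (B \ {x}) ⊆ Subtype.val '' (D \ {x}) :=
      Set.image_mono (Set.diff_subset_diff_left hBD)
    have h2 : ∀ W ∈ S, ((Subtype.val '' (B \ {x})) ∩ W).Infinite := by
      intro W hW
      obtain ⟨n, rfl⟩ := hf ▸ hW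
      have hinf : ((Z n ∩ B) \ {x}).Infinite := ((hBZ n).diff (Set.finite_singleton x))
      have himg : Subtype.val '' ((Z n ∩ B) \ {x}) ⊆ (Subtype.val '' (B \ {x})) ∩ f n := by
        rintro _ ⟨y, ⟨⟨hyZ, hyB⟩, hyx⟩, rfl⟩
        exact ⟨⟨y, ⟨hyB, hyx⟩, rfl⟩, hyZ⟩
      exact ((hinf.image (Set.injOn_of_injective Subtype.val_injective)).mono himg)
    have := hSfin _ h1 h2
    have := closure_subtype.2 this
    exact closure_mono Set.diff_subset this
  exact hBx hBx'
end

section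
/- Let X be a sequential topological space, S ⊆ X, and x ∈ closure(S). Let I be a family of subsets of X covering S. Then either there exists I ∈ I such that x ∈ closure(S ∩ I), or there is a countable family I* of countably infinite subfamilies of I such that whenever I' ⊆ I has infinite intersection with every member of I*, then x ∈ closure(S ∩ ⋃I'). -/
open Set Filter Topology TopologicalSpace

/-- the splitting cover lemma for sequential spaces. -/
theorem statement8 (X : Type*) [TopologicalSpace X] [T1Space X] [SequentialSpace X]
    (S : Set X) (x : X) (hx : x ∈ closure S)
    (I : Set (Set X)) (hcov : S ⊆ ⋃₀ I) :
    (∃ A ∈ I, x ∈ closure (S ∩ A)) ∨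
      ∃ Istar : Set (Set (Set X)), Istar.Countable ∧
        (∀ J ∈ Istar, J ⊆ I ∧ J.Countable ∧ J.Infinite) ∧
        ∀ I' ⊆ I, (∀ J ∈ Istar, (I' ∩ J).Infinite) →
          x ∈ closure (S ∩ ⋃₀ I') := by
  classical
  set P : X → Prop := fun y =>
    (∃ A ∈ I, y ∈ closure (S ∩ A)) ∨
      ∃ Istar : Set (Set (Set X)), Istar.Countable ∧
        (∀ J ∈ Istar, J ⊆ I ∧ J.Countable ∧ J.Infinite) ∧
        ∀ I' ⊆ I, (∀ J ∈ Istar, (I' ∩ J).Infinite) →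
          y ∈ closure (S ∩ ⋃₀ I') with hPdef
  suffices h : x ∈ {y | P y} by exact h
  have hsub : S ⊆ {y | P y} := by
    intro y hy
    obtain ⟨A, hA, hyA⟩ := hcov hy
    exact Or.inl ⟨A, hA, subset_closure ⟨hy, hyA⟩⟩
  have hseq : IsSeqClosed {y | P y} := by
    intro u y hu huy
    set T₀ : Set ℕ := {n : ℕ | ∃ A ∈ I, u n ∈ closure (S ∩ A)} with hT₀
    by_cases hcaseA : T₀.Infinite
    · -- infinitely many terms satisfy alternative 1
      choose! A hAI hAcl using fun n (hn : n ∈ T₀) => hn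
      by_cases himg : (A '' T₀).Infinite
      · -- infinitely many distinct witnesses: put them in one countable family
        refine Or.inr ⟨{A '' T₀}, countable_singleton _, ?_, ?_⟩
        · rintro J hJ
          rw [mem_singleton_iff] at hJ
          subst hJ
          refine ⟨?_, (T₀.to_countable).image A, himg⟩
          rintro B ⟨n, hn, rfl⟩
          exact hAI n hn
        · intro I' hI' hcond
          have hinf : (I' ∩ A '' T₀).Infinite := hcond _ rfl
          have hN : {n : ℕ | n ∈ T₀ ∧ A n ∈ I'}.Infinite := by
            have hsub2 : I' ∩ A '' T₀ ⊆ A '' {n : ℕ | n ∈ T₀ ∧ A n ∈ I'} := by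
              rintro B ⟨hB1, n, hn, rfl⟩
              exact ⟨n, ⟨hn, hB1⟩, rfl⟩
            exact ((hinf.mono hsub2)).of_image
          have hfreq : ∃ᶠ n in atTop, u n ∈ closure (S ∩ ⋃₀ I') := by
            refine (Nat.frequently_atTop_iff_infinite.2 hN).mono ?_
            rintro n ⟨hn, hnI'⟩
            exact closure_mono (inter_subset_inter_right _
              (subset_sUnion_of_mem hnI')) (hAcl n hn)
          have := mem_closure_of_frequently_of_tendsto hfreq huy
          rwa [closure_closure] at this
      · -- a single witness repeats infinitely often
        rw [Set.not_infinite] at himg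
        have : ∃ a ∈ A '' T₀, {n : ℕ | n ∈ T₀ ∧ A n = a}.Infinite := by
          by_contra hcon
          push_neg at hcon
          have : T₀ ⊆ ⋃ a ∈ A '' T₀, {n : ℕ | n ∈ T₀ ∧ A n = a} := by
            intro n hn
            exact mem_biUnion (mem_image_of_mem A hn) ⟨hn, rfl⟩
          exact hcaseA (((himg.biUnion hcon).subset this))
        obtain ⟨a, ha, hfib⟩ := this
        obtain ⟨m, hm, rfl⟩ := ha
        refine Or.inl ⟨A m, hAI m hm, ?_⟩
        have hfreq : ∃ᶠ n in atTop, u n ∈ closure (S ∩ A m) := by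
          refine (Nat.frequently_atTop_iff_infinite.2 hfib).mono ?_
          rintro n ⟨hn, hEq⟩
          rw [← hEq]
          exact hAcl n hn
        have := mem_closure_of_frequently_of_tendsto hfreq huy
        rwa [closure_closure] at this
    · -- cofinitely many terms satisfy alternative 2
      rw [Set.not_infinite] at hcaseA
      have h2 : ∀ n, n ∉ T₀ → ∃ Istar : Set (Set (Set X)), Istar.Countable ∧
          (∀ J ∈ Istar, J ⊆ I ∧ J.Countable ∧ J.Infinite) ∧
          ∀ I' ⊆ I, (∀ J ∈ Istar, (I' ∩ J).Infinite) →
            u n ∈ closure (S ∩ ⋃₀ I') := by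
        intro n hn
        exact (hu n).resolve_left hn
      choose! K hKc hKmem hKfin using h2
      refine Or.inr ⟨⋃ n ∈ T₀ᶜ, K n, ?_, ?_, ?_⟩
      · exact Set.Countable.biUnion (Set.to_countable _) fun n hn => hKc n hn
      · intro J hJ
        obtain ⟨n, hn, hJn⟩ := mem_iUnion₂.1 hJ
        exact hKmem n hn J hJn
      · intro I' hI' hcond
        have hfreq : ∃ᶠ n in atTop, u n ∈ closure (S ∩ ⋃₀ I') := by
          refine (Nat.frequently_atTop_iff_infinite.2 hcaseA.infinite_compl).mono ?_
          intro n hn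
          exact hKfin n hn I' hI' fun J hJ => hcond J (mem_biUnion hn hJ)
        have := mem_closure_of_frequently_of_tendsto hfreq huy
        rwa [closure_closure] at this
  exact (hseq.isClosed.closure_subset_iff.2 hsub) hx
end

section
/- Let G be a countable non-discrete sequential T1 topological group. Then each of the ideals nwd(G) (nowhere dense subsets), cpt(G) (the ideal generated by compact subsets), and csct(G) (the ideal generated by closed scattered subsets) is tame. -/
open Set Filter Topology TopologicalSpace

namespace S10

variable {G : Type*} [TopologicalSpace G]

lemma conv_subset {C C' : Set G} {p : G} (h : IsConvSeqTo C p) (hsub : C' ⊆ C)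
    (hinf : C'.Infinite) : IsConvSeqTo C' p :=
  ⟨hinf, fun U hU => (h.2 U hU).subset (diff_subset_diff_left hsub)⟩

lemma conv_mem_closure {C : Set G} {p : G} (h : IsConvSeqTo C p) : p ∈ closure C := by
  rw [mem_closure_iff_nhds]
  intro U hU
  have h1 : (C \ U).Finite := h.2 U hU
  by_contra hemp
  rw [not_nonempty_iff_eq_empty] at hemp
  apply h.1
  have hsub : C ⊆ C \ U ∪ (U ∩ C) := by
    intro c hc
    by_cases hcU : c ∈ U
    · exact Or.inr ⟨hcU, hc⟩
    · exact Or.inl ⟨hc, hcU⟩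
  exact (h1.union (by rw [hemp]; exact finite_empty)).subset hsub

lemma setSeqClosed_isClosed [T1Space G] [SequentialSpace G] {B : Set G}
    (h : ∀ C ⊆ B, ∀ p : G, IsConvSeqTo C p → p ∈ B) : IsClosed B := by
  apply IsSeqClosed.isClosed
  intro x p hx hxp
  by_cases hfin : (Set.range x).Finite
  · have hcl : closure (Set.range x) = Set.range x := hfin.isClosed.closure_eq
    have hp : p ∈ closure (Set.range x) :=
      mem_closure_of_tendsto hxp (Eventually.of_forall (fun n => mem_range_self n))
    rw [hcl] at hp
    obtain ⟨n, rfl⟩ := hp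
    exact hx n
  · apply h (Set.range x) (range_subset_iff.2 hx) p
    refine ⟨hfin, fun U hU => ?_⟩
    have hev : ∀ᶠ n in atTop, x n ∈ U := hxp hU
    obtain ⟨N, hN⟩ := eventually_atTop.1 hev
    apply ((Set.finite_Iio N).image x).subset
    rintro c ⟨⟨n, rfl⟩, hcU⟩
    refine ⟨n, ?_, rfl⟩
    by_contra hn
    exact hcU (hN n (le_of_not_gt hn))

/-- points in infinitely many of the `F n`. -/
def NinfSet (F : ℕ → Set G) : Set G := {p | {n | p ∈ F n}.Infinite}

/-- points reachable by a convergent sequence spread over infinitely many `F n`. -/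
def GoodSpread (F : ℕ → Set G) : Set G :=
  {p | ∃ C : Set G, ∃ ν : G → ℕ, IsConvSeqTo C p ∧ (∀ c ∈ C, c ∈ F (ν c)) ∧
      ∀ n, (C ∩ ν ⁻¹' {n}).Finite}

def PhiSet (F : ℕ → Set G) : Set G := NinfSet F ∪ GoodSpread F

lemma masterClosure [T1Space G] [SequentialSpace G] {F : ℕ → Set G}
    (hF : ∀ n, IsClosed (F n)) (s : Set ℕ) {S : Set G}
    (hS1 : S ⊆ ⋃ n, F n) (hS2 : ∀ n ∈ s, S ∩ F n = ∅) :
    closure S ⊆ closure (PhiSet F) ∪ {p | ∃ n, n ∉ s ∧ p ∈ F n} := by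
  classical
  set B := closure (PhiSet F) ∪ {p | ∃ n, n ∉ s ∧ p ∈ F n} with hB
  have hSB : S ⊆ B := by
    intro y hy
    obtain ⟨n, hn⟩ := mem_iUnion.1 (hS1 hy)
    right
    refine ⟨n, fun hns => ?_, hn⟩
    have h0 := hS2 n hns
    exact notMem_empty y (h0 ▸ (⟨hy, hn⟩ : y ∈ S ∩ F n))
  refine closure_minimal hSB (setSeqClosed_isClosed ?_)
  intro C hC q hq
  by_cases h1 : (C ∩ closure (PhiSet F)).Infinite
  · left
    have : q ∈ closure (C ∩ closure (PhiSet F)) :=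
      conv_mem_closure (conv_subset hq inter_subset_left h1)
    exact closure_closure (s := PhiSet F) ▸
      (closure_mono inter_subset_right this)
  · have h2 : (C \ closure (PhiSet F)).Infinite := by
      intro hfin
      apply hq.1
      have : C ⊆ (C ∩ closure (PhiSet F)) ∪ (C \ closure (PhiSet F)) := by
        intro c hc
        by_cases hcc : c ∈ closure (PhiSet F)
        · exact Or.inl ⟨hc, hcc⟩
        · exact Or.inr ⟨hc, hcc⟩
      exact (((not_infinite.1 h1).union hfin).subset this)
    set C₂ := C \ closure (PhiSet F) with hC₂
    have hC₂mem : ∀ c ∈ C₂, ∃ n, n ∉ s ∧ c ∈ F n := by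
      intro c hc
      rcases hC hc.1 with h | h
      · exact absurd h hc.2
      · exact h
    by_cases h3 : ∃ n, n ∉ s ∧ (C₂ ∩ F n).Infinite
    · obtain ⟨n, hns, hn⟩ := h3
      right
      refine ⟨n, hns, ?_⟩
      have : q ∈ closure (C₂ ∩ F n) :=
        conv_mem_closure (conv_subset hq (fun c hc => hc.1.1) hn)
      exact (hF n).closure_eq ▸ closure_mono inter_subset_right this
    · push_neg at h3
      left
      apply subset_closure
      right
      set ν : G → ℕ := fun c => if h : ∃ n, n ∉ s ∧ c ∈ F n then h.choose else 0 with hν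
      have hνspec : ∀ c ∈ C₂, ν c ∉ s ∧ c ∈ F (ν c) := by
        intro c hc
        have h := hC₂mem c hc
        simp only [hν, dif_pos h]
        exact h.choose_spec
      refine ⟨C₂, ν, conv_subset hq diff_subset h2, fun c hc => (hνspec c hc).2, ?_⟩
      intro n
      by_cases hns : n ∈ s
      · have : C₂ ∩ ν ⁻¹' {n} = ∅ := by
          apply eq_empty_iff_forall_notMem.2
          rintro c ⟨hc, hcn⟩
          rw [mem_preimage, mem_singleton_iff] at hcn
          exact (hνspec c hc).1 (hcn ▸ hns)
        rw [this]; exact finite_empty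
      · apply (h3 n hns).subset
        rintro c ⟨hc, hcn⟩
        rw [mem_preimage, mem_singleton_iff] at hcn
        exact ⟨hc, hcn ▸ (hνspec c hc).2⟩

lemma spread_forced {A : Set G} {ν : G → ℕ} (hA : A.Infinite)
    (hfib : ∀ n, (A ∩ ν ⁻¹' {n}).Finite) :
    ∃ Z : Set ℕ, Z.Infinite ∧ ∀ j : Set ℕ, (Z ∩ j).Infinite → {a | a ∈ A ∧ ν a ∈ j}.Infinite := by
  refine ⟨ν '' A, ?_, ?_⟩
  · intro hfin
    apply hA
    have hsub : A ⊆ ⋃ n ∈ ν '' A, (A ∩ ν ⁻¹' {n}) := by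
      intro a ha
      exact mem_biUnion (mem_image_of_mem ν ha) ⟨ha, rfl⟩
    exact (hfin.biUnion (fun n _ => hfib n)).subset hsub
  · intro j hj hfin
    apply hj
    have hsub : ν '' A ∩ j ⊆ ν '' {a | a ∈ A ∧ ν a ∈ j} := by
      rintro n ⟨⟨a, haA, rfl⟩, hnj⟩
      exact mem_image_of_mem ν ⟨haA, hnj⟩
    exact (hfin.image ν).subset hsub

lemma phi_forced {F : ℕ → Set G} {p : G} (hp : p ∈ PhiSet F) :
    ∃ Z : Set ℕ, Z.Infinite ∧
      ∀ j : Set ℕ, (Z ∩ j).Infinite → p ∈ closure (⋃ n ∈ j, F n) := by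
  rcases hp with hp | hp
  · refine ⟨{n | p ∈ F n}, hp, fun j hj => ?_⟩
    obtain ⟨n, hn⟩ := hj.nonempty
    exact subset_closure (mem_biUnion hn.2 hn.1)
  · obtain ⟨C, ν, hconv, hmem, hfib⟩ := hp
    obtain ⟨Z, hZ, hZf⟩ := spread_forced hconv.1 (fun n => hfib n)
    refine ⟨Z, hZ, fun j hj => ?_⟩
    have hD : {a | a ∈ C ∧ ν a ∈ j}.Infinite := hZf j hj
    have h1 : p ∈ closure {a | a ∈ C ∧ ν a ∈ j} :=
      conv_mem_closure (conv_subset hconv (fun a ha => ha.1) hD)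
    apply closure_mono ?_ h1
    intro a ha
    exact mem_biUnion ha.2 (hmem a ha.1)

lemma exists_hitting [Countable G] [Nonempty G] {F : ℕ → Set G} {J : Set (Set ℕ)}
    (hJhit : OmegaHitting J) (Z₀ : Set ℕ) (hZ₀ : Z₀.Infinite) :
    ∃ j ∈ J, (Z₀ ∩ j).Infinite ∧ ∀ p ∈ PhiSet F, p ∈ closure (⋃ n ∈ j, F n) := by
  classical
  obtain ⟨e, he⟩ := exists_surjective_nat G
  have hforce : ∀ p : G, ∃ Z : Set ℕ, Z.Infinite ∧
      (p ∈ PhiSet F → ∀ j : Set ℕ, (Z ∩ j).Infinite → p ∈ closure (⋃ n ∈ j, F n)) := by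
    intro p
    by_cases hp : p ∈ PhiSet F
    · obtain ⟨Z, h1, h2⟩ := phi_forced hp
      exact ⟨Z, h1, fun _ => h2⟩
    · exact ⟨Set.univ, infinite_univ, fun h => absurd h hp⟩
  choose ζ hζ1 hζ2 using hforce
  set fam : ℕ → Set ℕ := fun n => Nat.casesOn n Z₀ (fun m => ζ (e m)) with hfam
  have hfaminf : ∀ n, (fam n).Infinite := by
    rintro (_ | m)
    · exact hZ₀
    · exact hζ1 (e m)
  obtain ⟨j, hjJ, hj⟩ := hJhit fam hfaminf
  refine ⟨j, hjJ, hj 0, fun p hp => ?_⟩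
  obtain ⟨m, rfl⟩ := he p
  exact hζ2 (e m) hp j (hj (m + 1))

lemma int_empty_union {A B : Set G} (hA : IsClosed A) (hAi : interior A = ∅)
    (hBi : interior B = ∅) : interior (A ∪ B) = ∅ := by
  rw [eq_empty_iff_forall_notMem]
  intro x hx
  have hU : interior (A ∪ B) \ A ⊆ interior B :=
    interior_maximal (fun y hy => (interior_subset hy.1).resolve_left hy.2)
      (isOpen_interior.sdiff hA)
  rw [hBi, subset_empty_iff, diff_eq_empty] at hU
  have : interior (A ∪ B) ⊆ interior A := interior_maximal hU isOpen_interior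
  rw [hAi, subset_empty_iff] at this
  exact notMem_empty x (this ▸ hx)

lemma closed_nwd_biUnion {F : ℕ → Set G} {s : Set ℕ} (hs : s.Finite)
    (h : ∀ n, IsClosed (F n) ∧ interior (F n) = ∅) :
    IsClosed (⋃ n ∈ s, F n) ∧ interior (⋃ n ∈ s, F n) = ∅ := by
  have key : ∀ t : Set ℕ, t.Finite → interior (⋃ n ∈ t, F n) = ∅ := by
    intro t ht
    refine Set.Finite.induction_on t ht (by simp) ?_
    intro a u _ _ ih
    rw [biUnion_insert]
    exact int_empty_union (h a).1 (h a).2 ih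
  exact ⟨hs.isClosed_biUnion (fun n _ => (h n).1), key s hs⟩

lemma nwd_master [T1Space G] [SequentialSpace G] {F : ℕ → Set G}
    (hF : ∀ n, IsClosed (F n) ∧ interior (F n) = ∅) {Y : Set G}
    (hYF : Y ⊆ ⋃ n, F n) :
    interior (closure Y) ⊆ closure (PhiSet F) := by
  intro p hp
  by_contra hpΦ
  set s := {n | p ∈ F n} with hs
  have hsfin : s.Finite := by
    by_contra hsinf
    exact hpΦ (subset_closure (Or.inl hsinf))
  set V := interior (closure Y) with hV
  set K := ⋃ n ∈ s, F n with hK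
  obtain ⟨hKc, hKi⟩ := closed_nwd_biUnion hsfin hF
  set S := (Y ∩ V) \ K with hS
  have hpS : p ∈ closure S := by
    rw [mem_closure_iff_nhds]
    intro U hU
    obtain ⟨o, hoU, ho, hpo⟩ := mem_nhds_iff.1 hU
    have h1 : ¬ (o ∩ V ⊆ K) := by
      intro hsub
      have h2 : o ∩ V ⊆ interior K := interior_maximal hsub (ho.inter isOpen_interior)
      rw [hKi, subset_empty_iff] at h2
      exact notMem_empty p (h2 ▸ (⟨hpo, hp⟩ : p ∈ o ∩ V))
    obtain ⟨z, hz, hzK⟩ := not_subset.1 h1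
    have hz2 : z ∈ closure Y := interior_subset hz.2
    have hnz : ((o ∩ V) \ K) ∈ nhds z :=
      (((ho.inter isOpen_interior).sdiff hKc).mem_nhds ⟨hz, hzK⟩)
    obtain ⟨y, hy1, hy2⟩ := mem_closure_iff_nhds.1 hz2 _ hnz
    exact ⟨y, hoU hy1.1.1, ⟨⟨hy2, hy1.1.2⟩, hy1.2⟩⟩
  have hS1 : S ⊆ ⋃ n, F n := fun y hy => hYF hy.1.1
  have hS2 : ∀ n ∈ s, S ∩ F n = ∅ := by
    intro n hn
    rw [eq_empty_iff_forall_notMem]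
    rintro y ⟨hyS, hyF⟩
    exact hyS.2 (mem_biUnion hn hyF)
  rcases masterClosure (fun n => (hF n).1) s hS1 hS2 hpS with h | ⟨n, hns, hpF⟩
  · exact hpΦ h
  · exact hns hpF

lemma isScattered_subset {A B : Set G} (h : IsScattered A) (hsub : B ⊆ A) :
    IsScattered B := fun C hC => h C (hC.trans hsub)

lemma isScattered_union {A B : Set G} (hA : IsClosed A) (hsA : IsScattered A)
    (hsB : IsScattered B) : IsScattered (A ∪ B) := by
  intro C hC hCne
  by_cases h1 : (C \ A).Nonempty
  · obtain ⟨x, hx, U, hU, hUC⟩ := hsB (C \ A)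
      (fun c hc => (hC hc.1).resolve_left hc.2) h1
    refine ⟨x, hx.1, U ∩ Aᶜ, hU.inter hA.isOpen_compl, ?_⟩
    have hxU : x ∈ U := by
      have : x ∈ U ∩ (C \ A) := by rw [hUC]; rfl
      exact this.1
    apply Subset.antisymm
    · rintro y ⟨⟨hyU, hyA⟩, hyC⟩
      have : y ∈ U ∩ (C \ A) := ⟨hyU, hyC, hyA⟩
      rw [hUC] at this; exact this
    · rintro y rfl
      exact ⟨⟨hxU, hx.2⟩, hx.1⟩
  · rw [not_nonempty_iff_eq_empty, diff_eq_empty] at h1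
    exact hsA C h1 hCne

lemma isScattered_biUnion {F : ℕ → Set G} {s : Set ℕ} (hs : s.Finite)
    (h : ∀ n, IsClosed (F n) ∧ IsScattered (F n)) :
    IsScattered (⋃ n ∈ s, F n) := by
  refine Set.Finite.induction_on s hs ?_ ?_
  · intro C hC hCne
    simp only [mem_empty_iff_false, iUnion_of_empty, iUnion_empty] at hC
    rw [subset_empty_iff] at hC
    exact absurd (hC ▸ hCne) (Set.not_nonempty_empty)
  · intro a u _ _ ih
    rw [biUnion_insert]
    exact isScattered_union (h a).1 (h a).2 ih

lemma csct_master [T1Space G] [SequentialSpace G] {F : ℕ → Set G}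
    (hF : ∀ n, IsClosed (F n) ∧ IsScattered (F n)) {P : Set G}
    (hPc : ∀ x ∈ P, x ∈ closure (P \ {x}))
    (hPF : P ⊆ closure (PhiSet F) ∪ {p | ∃ n, p ∈ F n}) :
    P ⊆ closure (PhiSet F) := by
  intro p hp
  by_contra hpΦ
  set s := {n | p ∈ F n} with hs
  have hsfin : s.Finite := by
    by_contra hsinf
    exact hpΦ (subset_closure (Or.inl hsinf))
  set K := ⋃ n ∈ s, F n with hK
  have hKc : IsClosed K := hsfin.isClosed_biUnion (fun n _ => (hF n).1)
  have hKs : IsScattered K := isScattered_biUnion hsfin hF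
  set S := (((P \ closure (PhiSet F)) \ K) \ {p}) with hSdef
  have hpS : p ∈ closure S := by
    rw [mem_closure_iff_nhds]
    intro U hU
    obtain ⟨o, hoU, ho, hpo⟩ := mem_nhds_iff.1 hU
    by_contra hemp
    rw [not_nonempty_iff_eq_empty] at hemp
    set T := (o ∩ (closure (PhiSet F))ᶜ) ∩ (P \ {p}) with hT
    have hTK : T ⊆ K := by
      rintro t ⟨⟨hto, htΦ⟩, htP, htp⟩
      by_contra htK
      exact notMem_empty t (hemp ▸ (⟨hoU hto, ⟨⟨⟨htP, htΦ⟩, htK⟩, htp⟩⟩ : t ∈ U ∩ S))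
    have hTne : T.Nonempty := by
      have h1 := hPc p hp
      have ho2 : IsOpen (o ∩ (closure (PhiSet F))ᶜ) := ho.inter isClosed_closure.isOpen_compl
      have hpo2 : p ∈ o ∩ (closure (PhiSet F))ᶜ := ⟨hpo, hpΦ⟩
      obtain ⟨y, hy1, hy2⟩ := mem_closure_iff_nhds.1 h1 _ (ho2.mem_nhds hpo2)
      exact ⟨y, hy1, hy2⟩
    obtain ⟨x, hxT, Ux, hUx, hUxT⟩ := hKs T hTK hTne
    have hxp : x ∉ ({p} : Set G) := hxT.2.2
    have hxU : x ∈ Ux := by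
      have hxx : x ∈ Ux ∩ T := by rw [hUxT]; rfl
      exact hxx.1
    have hx1 := hPc x hxT.2.1
    have hW : IsOpen ((o ∩ (closure (PhiSet F))ᶜ ∩ Ux) ∩ ({p}ᶜ)) :=
      ((ho.inter isClosed_closure.isOpen_compl).inter hUx).inter isClosed_singleton.isOpen_compl
    have hxW : x ∈ ((o ∩ (closure (PhiSet F))ᶜ ∩ Ux) ∩ ({p}ᶜ)) := ⟨⟨hxT.1, hxU⟩, hxp⟩
    obtain ⟨y, hyW, hyPx⟩ := mem_closure_iff_nhds.1 hx1 _ (hW.mem_nhds hxW)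
    have hyT : y ∈ T := ⟨hyW.1.1, hyPx.1, hyW.2⟩
    have hyx : y ∈ Ux ∩ T := ⟨hyW.1.2, hyT⟩
    rw [hUxT] at hyx
    exact hyPx.2 hyx
  have hS1 : S ⊆ ⋃ n, F n := by
    intro y hy
    rcases hPF hy.1.1.1 with h | ⟨n, hn⟩
    · exact absurd h hy.1.1.2
    · exact mem_iUnion.2 ⟨n, hn⟩
  have hS2 : ∀ n ∈ s, S ∩ F n = ∅ := by
    intro n hn
    rw [eq_empty_iff_forall_notMem]
    rintro y ⟨hyS, hyF⟩
    exact hyS.1.2 (mem_biUnion hn hyF)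
  rcases masterClosure (fun n => (hF n).1) s hS1 hS2 hpS with h | ⟨n, hns, hpF2⟩
  · exact hpΦ h
  · exact hns hpF2

/-- a compact set all whose points are relatively isolated is finite. -/
lemma compact_isolated_finite {S : Set G} (hS : IsCompact S)
    (h : ∀ x ∈ S, ∃ U : Set G, IsOpen U ∧ U ∩ S = {x}) : S.Finite := by
  classical
  set V : G → Set G := fun x => if hx : x ∈ S then (h x hx).choose else ∅ with hV
  have hVopen : ∀ x : G, IsOpen (V x) := by
    intro x
    by_cases hx : x ∈ S
    · simp only [hV, dif_pos hx]; exact (h x hx).choose_spec.1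
    · simp only [hV, dif_neg hx]; exact isOpen_empty
  have hVx : ∀ x ∈ S, V x ∩ S = {x} := by
    intro x hx
    simp only [hV, dif_pos hx]
    exact (h x hx).choose_spec.2
  have hcov : S ⊆ ⋃ x : G, V x := by
    intro y hy
    refine mem_iUnion.2 ⟨y, ?_⟩
    have : y ∈ V y ∩ S := by rw [hVx y hy]; rfl
    exact this.1
  obtain ⟨t, ht⟩ := hS.elim_finite_subcover V hVopen hcov
  apply (t.finite_toSet).subset
  intro y hy
  obtain ⟨x, hxt, hyx⟩ := mem_iUnion₂.1 (ht hy)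
  have : y ∈ V x ∩ S := ⟨hyx, hy⟩
  by_cases hx : x ∈ S
  · rw [hVx x hx] at this
    exact this ▸ hxt
  · exfalso
    rw [hV] at hyx
    simp only [dif_neg hx] at hyx
    exact notMem_empty y hyx


lemma closedDiscrete_subset {A D : Set G} (hD : D ⊆ A) (h1 : IsClosed A)
    (h2 : ∀ x ∈ A, ∃ U : Set G, IsOpen U ∧ U ∩ A = {x}) :
    IsClosed D ∧ ∀ x ∈ D, ∃ U : Set G, IsOpen U ∧ U ∩ D = {x} := by
  constructor
  · rw [← isOpen_compl_iff]
    rw [isOpen_iff_mem_nhds]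
    intro z hz
    by_cases hzA : z ∈ A
    · obtain ⟨U, hU, hUA⟩ := h2 z hzA
      have hzU : z ∈ U := by
        have hmem : z ∈ U ∩ A := by rw [hUA]; rfl
        exact hmem.1
      refine Filter.mem_of_superset (hU.mem_nhds hzU) ?_
      intro y hy hyD
      have hmem : y ∈ U ∩ A := ⟨hy, hD hyD⟩
      rw [hUA] at hmem
      exact hz (hmem ▸ hyD)
    · exact Filter.mem_of_superset (h1.isOpen_compl.mem_nhds hzA)
        (fun y hy hyD => hy (hD hyD))
  · intro x hx
    obtain ⟨U, hU, hUA⟩ := h2 x (hD hx)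
    refine ⟨U, hU, Subset.antisymm ?_ ?_⟩
    · intro y hy
      have hmem : y ∈ U ∩ A := ⟨hy.1, hD hy.2⟩
      rw [hUA] at hmem; exact hmem
    · rintro y rfl
      have hmem : y ∈ U ∩ A := by rw [hUA]; rfl
      exact ⟨hmem.1, hx⟩

lemma closedDiscrete_inter_compact_finite {A K : Set G} (h1 : IsClosed A)
    (h2 : ∀ x ∈ A, ∃ U : Set G, IsOpen U ∧ U ∩ A = {x}) (hK : IsCompact K) :
    (A ∩ K).Finite := by
  rw [inter_comm]
  apply compact_isolated_finite (hK.inter_right h1)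
  intro x hx
  obtain ⟨U, hU, hUA⟩ := h2 x hx.2
  refine ⟨U, hU, Subset.antisymm ?_ ?_⟩
  · intro y hy
    have hmem : y ∈ U ∩ A := ⟨hy.1, hy.2.2⟩
    rw [hUA] at hmem; exact hmem
  · rintro y rfl
    have hmem : y ∈ U ∩ A := by rw [hUA]; rfl
    exact ⟨hmem.1, hx⟩

lemma exists_closedDiscrete_of_noncompact [T1Space G] [Countable G] [Nonempty G]
    {T : Set G} (hT : IsClosed T) (hnc : ¬ IsCompact T) :
    ∃ A : Set G, A.Infinite ∧ A ⊆ T ∧ IsClosed A ∧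
      ∀ x ∈ A, ∃ U : Set G, IsOpen U ∧ U ∩ A = {x} := by
  classical
  rw [isCompact_iff_finite_subcover] at hnc
  push_neg at hnc
  obtain ⟨ι, U, hUopen, hUcov, hnofin⟩ := hnc
  obtain ⟨e, he⟩ := exists_surjective_nat G
  have hι : ∀ x, x ∈ T → ∃ i, x ∈ U i := fun x hx => mem_iUnion.1 (hUcov hx)
  set W : ℕ → Set G := fun n => if h : e n ∈ T then U (hι (e n) h).choose else ∅ with hW
  have hWopen : ∀ n, IsOpen (W n) := by
    intro n
    by_cases h : e n ∈ T
    · simp only [hW, dif_pos h]; exact hUopen _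
    · simp only [hW, dif_neg h]; exact isOpen_empty
  have hWcov : T ⊆ ⋃ n, W n := by
    intro x hx
    obtain ⟨n, rfl⟩ := he x
    refine mem_iUnion.2 ⟨n, ?_⟩
    simp only [hW, dif_pos hx]
    exact (hι (e n) hx).choose_spec
  have hWnofin : ∀ t : Finset ℕ, ¬ T ⊆ ⋃ n ∈ t, W n := by
    intro t hsub
    have hTne : T.Nonempty := by
      rcases T.eq_empty_or_nonempty with h | h
      · exact absurd (by rw [h]; exact empty_subset _) (hnofin ∅)
      · exact h
    obtain ⟨x₀, hx₀⟩ := hTne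
    have hιne : Nonempty ι := ⟨(hι x₀ hx₀).choose⟩
    set q : ℕ → ι := fun n => if h : e n ∈ T then (hι (e n) h).choose else hιne.some with hq
    apply hnofin (t.image q)
    intro x hx
    obtain ⟨n, hnt, hxn⟩ := mem_iUnion₂.1 (hsub hx)
    have hen : e n ∈ T := by
      by_contra hen
      rw [hW] at hxn
      simp only [dif_neg hen] at hxn
      exact notMem_empty x hxn
    refine mem_iUnion₂.2 ⟨q n, Finset.mem_image_of_mem q hnt, ?_⟩
    rw [hq]
    simp only [dif_pos hen]
    rw [hW] at hxn
    simpa only [dif_pos hen] using hxn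
  have hSne : ∀ k : ℕ, (T \ ⋃ n ∈ Finset.range (k + 1), W n).Nonempty := by
    intro k
    rcases (T \ ⋃ n ∈ Finset.range (k + 1), W n).eq_empty_or_nonempty with h | h
    · rw [diff_eq_empty] at h
      exact absurd h (hWnofin (Finset.range (k + 1)))
    · exact h
  choose g hg using hSne
  have hgT : ∀ k, g k ∈ T := fun k => (hg k).1
  have hbound : ∀ m k, g k ∈ W m → k < m := by
    intro m k hk
    by_contra hkm
    exact (hg k).2 (mem_iUnion₂.2
      ⟨m, Finset.mem_range.2 (Nat.lt_succ_of_le (le_of_not_gt hkm)), hk⟩)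
  set A := Set.range g with hA
  have hAT : A ⊆ T := by rintro x ⟨k, rfl⟩; exact hgT k
  have hAinf : A.Infinite := by
    intro hfin
    have huniv : (⋃ x ∈ A, {k : ℕ | g k = x}) = Set.univ := by
      ext k
      simp only [mem_iUnion, mem_setOf_eq, mem_univ, iff_true]
      exact ⟨g k, ⟨k, rfl⟩, rfl⟩
    by_cases hall : ∀ x ∈ A, {k : ℕ | g k = x}.Finite
    · exact infinite_univ (huniv ▸ (hfin.biUnion hall))
    · push_neg at hall
      obtain ⟨x, hxA, hxinf⟩ := hall
      obtain ⟨m, hm⟩ := mem_iUnion.1 (hWcov (hAT hxA))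
      obtain ⟨k, hks, hkm⟩ := Set.Infinite.exists_gt hxinf m
      rw [← hks] at hm
      exact absurd (hbound m k hm) (by omega)
  have hiso : ∀ z ∈ T, ∃ V : Set G, IsOpen V ∧ z ∈ V ∧ V ∩ A ⊆ {z} := by
    intro z hz
    obtain ⟨m, hm⟩ := mem_iUnion.1 (hWcov hz)
    set E := (g '' (Set.Iio m)) \ {z} with hE
    have hEfin : E.Finite := ((Set.finite_Iio m).image g).subset diff_subset
    refine ⟨W m \ E, (hWopen m).sdiff hEfin.isClosed, ⟨hm, fun hzE => hzE.2 rfl⟩, ?_⟩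
    rintro y ⟨⟨hyW, hyE⟩, k, rfl⟩
    have hkm : k < m := hbound m k hyW
    by_contra hyz
    exact hyE ⟨⟨k, hkm, rfl⟩, hyz⟩
  refine ⟨A, hAinf, hAT, ?_, ?_⟩
  · rw [← isOpen_compl_iff, isOpen_iff_mem_nhds]
    intro z hz
    by_cases hzT : z ∈ T
    · obtain ⟨V, hV, hzV, hVA⟩ := hiso z hzT
      refine Filter.mem_of_superset (hV.mem_nhds hzV) ?_
      intro y hy hyA
      exact hz (hVA ⟨hy, hyA⟩ ▸ hyA)
    · exact Filter.mem_of_superset (hT.isOpen_compl.mem_nhds hzT)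
        (fun y hy hyA => hy (hAT hyA))
  · intro x hx
    obtain ⟨V, hV, hxV, hVA⟩ := hiso x (hAT hx)
    exact ⟨V, hV, Subset.antisymm hVA (by rintro y rfl; exact ⟨hxV, hx⟩)⟩

lemma isScattered_sUnion {Fam : Set (Set G)} (hfin : Fam.Finite)
    (h : ∀ K ∈ Fam, IsClosed K ∧ IsScattered K) : IsScattered (⋃₀ Fam) := by
  refine Set.Finite.induction_on_subset _ hfin ?_ ?_
  · intro B hB hBne
    rw [sUnion_empty, subset_empty_iff] at hB
    exact absurd (hB ▸ hBne) Set.not_nonempty_empty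
  · intro K t hKF _ _ ih
    rw [sUnion_insert]
    exact isScattered_union (h K hKF).1 (h K hKF).2 ih

lemma biUnion_closure_subset {Y : Set G} {f : G → ℕ} {j : Set ℕ} :
    closure (⋃ n ∈ j, closure (Y ∩ f ⁻¹' {n})) ⊆ closure (Y ∩ f ⁻¹' j) := by
  apply closure_minimal ?_ isClosed_closure
  apply iUnion₂_subset
  intro n hnj
  apply closure_mono
  rintro y ⟨hyY, hyf⟩
  rw [mem_preimage, mem_singleton_iff] at hyf
  exact ⟨hyY, by rw [mem_preimage, hyf]; exact hnj⟩

end S10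

/-- in a countable non-discrete sequential group the ideals
`nwd`, `cpt` and `csct` are tame. -/
theorem statement10 (G : Type*) [Group G] [TopologicalSpace G] [IsTopologicalGroup G]
    [T1Space G] [Countable G] [SequentialSpace G] (hnd : NonDiscrete G) :
    Tame (nwdIdeal G) ∧ Tame (cptIdeal G) ∧ Tame (csctIdeal G) := by
  classical
  haveI : T2Space G := inferInstance
  haveI : Nonempty G := ⟨1⟩
  refine ⟨?_, ?_, ?_⟩
  -- ============ nwd ============
  · intro Y hY f J hJ hJhit
    by_cases hfib : ∀ n, Y ∩ f ⁻¹' {n} ∈ nwdIdeal G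
    case neg =>
      push_neg at hfib
      obtain ⟨n, hn⟩ := hfib
      exact ⟨{n}, hJ.2.2 {n} (Set.finite_singleton n), hn⟩
    case pos =>
      set F : ℕ → Set G := fun n => closure (Y ∩ f ⁻¹' {n}) with hF
      have hYF : Y ⊆ ⋃ n, F n := fun y hy =>
        mem_iUnion.2 ⟨f y, subset_closure ⟨hy, rfl⟩⟩
      have hFn : ∀ n, IsClosed (F n) ∧ interior (F n) = ∅ := fun n =>
        ⟨isClosed_closure, hfib n⟩
      obtain ⟨j, hjJ, _, hjΦ⟩ := S10.exists_hitting (F := F) hJhit Set.univ infinite_univ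
      refine ⟨j, hjJ, fun hW => ?_⟩
      have hVΦ : interior (closure Y) ⊆ closure (S10.PhiSet F) := S10.nwd_master hFn hYF
      have hΦj : closure (S10.PhiSet F) ⊆ closure (⋃ n ∈ j, F n) :=
        closure_minimal (fun p hp => hjΦ p hp) isClosed_closure
      have hne : (interior (closure Y)).Nonempty := by
        rw [Set.nonempty_iff_ne_empty]
        exact hY
      obtain ⟨p, hp⟩ := hne
      have hpW : p ∈ interior (closure (Y ∩ f ⁻¹' j)) :=
        interior_maximal
          (fun q hq => S10.biUnion_closure_subset (hΦj (hVΦ hq))) isOpen_interior hp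
      exact notMem_empty p ((hW : interior (closure (Y ∩ f ⁻¹' j)) = ∅) ▸ hpW)
  -- ============ cpt ============
  · intro Y hY f J hJ hJhit
    by_cases hfib : ∀ n, Y ∩ f ⁻¹' {n} ∈ cptIdeal G
    case neg =>
      push_neg at hfib
      obtain ⟨n, hn⟩ := hfib
      exact ⟨{n}, hJ.2.2 {n} (Set.finite_singleton n), hn⟩
    case pos =>
      set F : ℕ → Set G := fun n => closure (Y ∩ f ⁻¹' {n}) with hF
      have hYF : Y ⊆ ⋃ n, F n := fun y hy =>
        mem_iUnion.2 ⟨f y, subset_closure ⟨hy, rfl⟩⟩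
      have hFcl : ∀ n, IsClosed (F n) := fun _ => isClosed_closure
      have hsUn : ∀ Fam : Set (Set G), Fam.Finite → (∀ K ∈ Fam, IsCompact K) →
          IsCompact (⋃₀ Fam) ∧ IsClosed (⋃₀ Fam) := by
        intro Fam hfin hcpt
        rw [sUnion_eq_biUnion]
        exact ⟨hfin.isCompact_biUnion hcpt,
          hfin.isClosed_biUnion (fun K hK => (hcpt K hK).isClosed)⟩
      have hFcpt : ∀ n, IsCompact (F n) := by
        intro n
        obtain ⟨Fam, hfin, hcpt, hsub⟩ := hfib n
        obtain ⟨h1, h2⟩ := hsUn Fam hfin hcpt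
        exact h1.of_isClosed_subset isClosed_closure (closure_minimal hsub h2)
      have hYnc : ¬ IsCompact (closure Y) := by
        intro hc
        refine hY ⟨{closure Y}, Set.finite_singleton _, ?_, ?_⟩
        · rintro K hK
          rw [mem_singleton_iff] at hK
          exact hK ▸ hc
        · rw [sUnion_singleton]
          exact subset_closure
      obtain ⟨A, hAinf, hAT, hAcl, hAdisc⟩ :=
        S10.exists_closedDiscrete_of_noncompact isClosed_closure hYnc
      have hclaimC : closure Y ⊆ closure (S10.PhiSet F) ∪
          {p | ∃ n, n ∉ (∅ : Set ℕ) ∧ p ∈ F n} :=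
        S10.masterClosure hFcl ∅ hYF (fun n hn => absurd hn (notMem_empty n))
      have hfinal : ∀ (D : Set G) (j : Set ℕ), D.Infinite → D ⊆ A →
          D ⊆ closure (Y ∩ f ⁻¹' j) → Y ∩ f ⁻¹' j ∈ cptIdeal G → False := by
        intro D j hDinf hDA hDW hWc
        obtain ⟨Fam, hfin, hcpt, hsub⟩ := hWc
        obtain ⟨h1, h2⟩ := hsUn Fam hfin hcpt
        obtain ⟨hDcl, hDdisc⟩ := S10.closedDiscrete_subset hDA hAcl hAdisc
        apply hDinf
        apply (S10.closedDiscrete_inter_compact_finite hDcl hDdisc h1).subset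
        intro a ha
        exact ⟨ha, (closure_minimal hsub h2) (hDW ha)⟩
      by_cases hA' : (A \ closure (S10.PhiSet F)).Infinite
      case pos =>
        have hmem : ∀ a ∈ A \ closure (S10.PhiSet F), ∃ n, a ∈ F n := by
          intro a ha
          rcases hclaimC (hAT ha.1) with h | ⟨n, _, hn⟩
          · exact absurd h ha.2
          · exact ⟨n, hn⟩
        set ν : G → ℕ := fun a => if h : ∃ n, a ∈ F n then h.choose else 0 with hν
        have hνmem : ∀ a ∈ A \ closure (S10.PhiSet F), a ∈ F (ν a) := by
          intro a ha
          have h := hmem a ha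
          simp only [hν, dif_pos h]
          exact h.choose_spec
        have hfibν : ∀ n, ((A \ closure (S10.PhiSet F)) ∩ ν ⁻¹' {n}).Finite := by
          intro n
          apply (S10.closedDiscrete_inter_compact_finite hAcl hAdisc (hFcpt n)).subset
          rintro a ⟨ha, han⟩
          rw [mem_preimage, mem_singleton_iff] at han
          exact ⟨ha.1, han ▸ hνmem a ha⟩
        obtain ⟨Z₀, hZ₀inf, hZ₀⟩ := S10.spread_forced hA' hfibν
        obtain ⟨j, hjJ, hj0, hjΦ⟩ := S10.exists_hitting (F := F) hJhit Z₀ hZ₀inf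
        refine ⟨j, hjJ, fun hWc => ?_⟩
        refine hfinal {a | a ∈ A \ closure (S10.PhiSet F) ∧ ν a ∈ j} j
          (hZ₀ j hj0) (fun a ha => ha.1.1) ?_ hWc
        intro a ha
        apply S10.biUnion_closure_subset
        exact subset_closure (mem_biUnion ha.2 (hνmem a ha.1))
      case neg =>
        have hA2 : (A ∩ closure (S10.PhiSet F)).Infinite := by
          intro hfin
          apply hAinf
          have hsplit : A ⊆ (A ∩ closure (S10.PhiSet F)) ∪ (A \ closure (S10.PhiSet F)) := by
            intro a ha
            by_cases h : a ∈ closure (S10.PhiSet F)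
            · exact Or.inl ⟨ha, h⟩
            · exact Or.inr ⟨ha, h⟩
          exact ((hfin.union (not_infinite.1 hA')).subset hsplit)
        obtain ⟨j, hjJ, _, hjΦ⟩ := S10.exists_hitting (F := F) hJhit Set.univ infinite_univ
        refine ⟨j, hjJ, fun hWc => ?_⟩
        refine hfinal (A ∩ closure (S10.PhiSet F)) j hA2 inter_subset_left ?_ hWc
        intro a ha
        apply S10.biUnion_closure_subset
        exact (closure_minimal (fun p hp => hjΦ p hp) isClosed_closure) ha.2
  -- ============ csct ============
  · intro Y hY f J hJ hJhit
    by_cases hfib : ∀ n, Y ∩ f ⁻¹' {n} ∈ csctIdeal G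
    case neg =>
      push_neg at hfib
      obtain ⟨n, hn⟩ := hfib
      exact ⟨{n}, hJ.2.2 {n} (Set.finite_singleton n), hn⟩
    case pos =>
      set F : ℕ → Set G := fun n => closure (Y ∩ f ⁻¹' {n}) with hF
      have hYF : Y ⊆ ⋃ n, F n := fun y hy =>
        mem_iUnion.2 ⟨f y, subset_closure ⟨hy, rfl⟩⟩
      have hsUn : ∀ Fam : Set (Set G), Fam.Finite →
          (∀ K ∈ Fam, IsClosed K ∧ IsScattered K) →
          IsClosed (⋃₀ Fam) ∧ IsScattered (⋃₀ Fam) := by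
        intro Fam hfin hprop
        constructor
        · rw [sUnion_eq_biUnion]
          exact hfin.isClosed_biUnion (fun K hK => (hprop K hK).1)
        · exact S10.isScattered_sUnion hfin hprop
      have hFs : ∀ n, IsClosed (F n) ∧ IsScattered (F n) := by
        intro n
        obtain ⟨Fam, hfin, hprop, hsub⟩ := hfib n
        obtain ⟨h1, h2⟩ := hsUn Fam hfin hprop
        exact ⟨isClosed_closure, S10.isScattered_subset h2 (closure_minimal hsub h1)⟩
      have hYs : ¬ IsScattered (closure Y) := by
        intro hs
        refine hY ⟨{closure Y}, Set.finite_singleton _, ?_, ?_⟩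
        · rintro K hK
          rw [mem_singleton_iff] at hK
          exact hK ▸ ⟨isClosed_closure, hs⟩
        · rw [sUnion_singleton]
          exact subset_closure
      rw [IsScattered] at hYs
      push_neg at hYs
      obtain ⟨B, hBsub, hBne, hBiso⟩ := hYs
      have hBc : ∀ x ∈ B, x ∈ closure (B \ {x}) := by
        intro x hx
        rw [mem_closure_iff_nhds]
        intro U hU
        obtain ⟨o, hoU, ho, hxo⟩ := mem_nhds_iff.1 hU
        by_contra hemp
        rw [Set.not_nonempty_iff_eq_empty] at hemp
        apply hBiso x hx o ho
        apply Subset.antisymm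
        · intro y hy
          by_contra hyx
          exact notMem_empty y (hemp ▸ (⟨hoU hy.1, hy.2, hyx⟩ : y ∈ U ∩ (B \ {x})))
        · rintro y rfl
          exact ⟨hxo, hx⟩
      have hPF : B ⊆ closure (S10.PhiSet F) ∪ {p | ∃ n, p ∈ F n} := by
        intro x hx
        rcases S10.masterClosure (fun n => (hFs n).1) ∅ hYF
          (fun n hn => absurd hn (notMem_empty n)) (hBsub hx) with h | ⟨n, _, hn⟩
        · exact Or.inl h
        · exact Or.inr ⟨n, hn⟩
      have hBΦ : B ⊆ closure (S10.PhiSet F) := S10.csct_master hFs hBc hPF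
      obtain ⟨j, hjJ, _, hjΦ⟩ := S10.exists_hitting (F := F) hJhit Set.univ infinite_univ
      refine ⟨j, hjJ, fun hWc => ?_⟩
      obtain ⟨Fam, hfin, hprop, hsub⟩ := hWc
      obtain ⟨h1, h2⟩ := hsUn Fam hfin hprop
      have hBK : B ⊆ ⋃₀ Fam := by
        intro x hx
        apply closure_minimal hsub h1
        apply S10.biUnion_closure_subset
        exact (closure_minimal (fun p hp => hjΦ p hp) isClosed_closure) (hBΦ hx)
      obtain ⟨x, hxB, U, hU, hUB⟩ := h2 B hBK hBne
      exact hBiso x hxB U hU hUB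
end

section
/- Assume the Invariant Ideal Axiom IIA. Then the product of at most countably many separable Fréchet T1 topological groups is Fréchet. -/
open Set Filter Topology TopologicalSpace

section Aux

set_option linter.unusedSectionVars false
set_option maxHeartbeats 1000000


variable {G : Type*} [Group G] [TopologicalSpace G] [IsTopologicalGroup G] [T1Space G]

lemma range_infinite_of_tendsto_ne {X : Type*} [TopologicalSpace X] [T1Space X]
    {u : ℕ → X} {x : X} (hu : Filter.Tendsto u Filter.atTop (nhds x)) (hne : ∀ n, u n ≠ x) :
    (Set.range u).Infinite := by
  intro hfin
  have hx : x ∉ Set.range u := by rintro ⟨n, rfl⟩; exact hne n rfl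
  have hmem : (Set.range u)ᶜ ∈ 𝓝 x := hfin.isClosed.isOpen_compl.mem_nhds hx
  obtain ⟨n, hn⟩ := (hu.eventually hmem).exists
  exact hn (Set.mem_range_self n)

lemma mem_closure_diff_finite {X : Type*} [TopologicalSpace X] [T1Space X] {s t : Set X} {x : X}
    (hx : x ∈ closure s) (hxt : x ∉ t) (ht : t.Finite) : x ∈ closure (s \ t) := by
  have hsub : s ⊆ (s \ t) ∪ t := by
    intro y hy
    by_cases h : y ∈ t
    · exact Or.inr h
    · exact Or.inl ⟨hy, h⟩
  have h2 := closure_mono hsub hx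
  rw [closure_union, ht.isClosed.closure_eq] at h2
  rcases h2 with h | h
  · exact h
  · exact absurd h hxt

lemma strong_frechet_one [FrechetUrysohnSpace G] (A : ℕ → Set G)
    (hdec : ∀ n, A (n + 1) ⊆ A n) (hcl : ∀ n, (1 : G) ∈ closure (A n)) :
    ∃ u : ℕ → G, (∀ n, u n ∈ A n) ∧ Filter.Tendsto u Filter.atTop (𝓝 1) := by
  haveI : T3Space G := ⟨⟩
  have hanti : Antitone A := antitone_nat_of_succ_le hdec
  by_cases hc : ∀ n, (1 : G) ∈ closure (A n \ {1})
  · -- main case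
    obtain ⟨y, hy_mem, hy⟩ := mem_closure_iff_seq_limit.1 (hc 0)
    have hyne : ∀ k, y k ≠ (1 : G) := fun k => (hy_mem k).2
    have hcl2 : ∀ n, (1 : G) ∈ closure ((A n \ {1}) \ {(y n)⁻¹}) := by
      intro n
      refine mem_closure_diff_finite (hc n) ?_ (Set.finite_singleton _)
      simp only [Set.mem_singleton_iff]
      intro h
      exact hyne n (by rw [← inv_inv (y n), ← h, inv_one])
    choose s hs_mem hs_t using fun n => mem_closure_iff_seq_limit.1 (hcl2 n)
    set C : Set G := {g | ∃ n k, g = s n k * y n} with hC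
    have hCcl : (1 : G) ∈ closure C := by
      rw [mem_closure_iff_nhds]
      intro U hU
      obtain ⟨V, hVo, hV1, hVV⟩ := exists_open_nhds_one_mul_subset hU
      obtain ⟨n, hn⟩ := (hy.eventually (hVo.mem_nhds hV1)).exists
      obtain ⟨k, hk⟩ := ((hs_t n).eventually (hVo.mem_nhds hV1)).exists
      exact ⟨s n k * y n, hVV (Set.mul_mem_mul hk hn), n, k, rfl⟩
    obtain ⟨c, hc_mem, hc_t⟩ := mem_closure_iff_seq_limit.1 hCcl
    choose n k hnk using hc_mem
    -- the n j are unbounded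
    have hub : ∀ N, ∃ j, N ≤ n j := by
      by_contra h
      push_neg at h
      obtain ⟨N, hN⟩ := h
      -- pigeonhole: some fiber of n is infinite
      have hcover : (Set.univ : Set ℕ) ⊆ ⋃ i ∈ Set.Iio N, {j | n j = i} :=
        fun j _ => Set.mem_biUnion (hN j) rfl
      have : ∃ i ∈ Set.Iio N, ¬ {j | n j = i}.Finite := by
        by_contra hfin
        push_neg at hfin
        exact Set.infinite_univ (Set.Finite.subset
          ((Set.finite_Iio N).biUnion (fun i hi => hfin i hi)) hcover)
      obtain ⟨n₀, _, hTinf⟩ := this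
      set T : Set ℕ := {j | n j = n₀} with hT
      -- now pigeonhole on values of c on T : c '' T is finite or k unbounded on T
      by_cases hk2 : ∀ K, ∃ j ∈ T, K ≤ k j
      · -- k unbounded on T: extract big j and big k simultaneously
        have hsel : ∀ m : ℕ, ∃ j, j ∈ T ∧ m ≤ j ∧ m ≤ k j := by
          intro m
          obtain ⟨j, hjT, hjk⟩ := hk2 (max m ((Finset.range m).sup k + 1))
          refine ⟨j, hjT, ?_, le_trans (le_max_left _ _) hjk⟩
          by_contra hlt
          push_neg at hlt
          have h1 : k j ≤ (Finset.range m).sup k := Finset.le_sup (Finset.mem_range.2 hlt)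
          have h2 : (Finset.range m).sup k + 1 ≤ k j := le_trans (le_max_right _ _) hjk
          omega
        choose jj hjjT hjj1 hjj2 using hsel
        have hlim1 : Filter.Tendsto (fun m => c (jj m) * (y n₀)⁻¹) Filter.atTop
            (𝓝 ((1 : G) * (y n₀)⁻¹)) :=
          Filter.Tendsto.mul (hc_t.comp (tendsto_atTop_mono hjj1 tendsto_id)) tendsto_const_nhds
        have heq : (fun m => c (jj m) * (y n₀)⁻¹) = fun m => s n₀ (k (jj m)) := by
          funext m
          have h1 := hnk (jj m)
          have h2 : n (jj m) = n₀ := hjjT m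
          rw [h1, h2, mul_inv_cancel_right]
        rw [heq] at hlim1
        have hlim2 : Filter.Tendsto (fun m => s n₀ (k (jj m))) Filter.atTop (𝓝 1) :=
          (hs_t n₀).comp (tendsto_atTop_mono hjj2 tendsto_id)
        have : (1 : G) * (y n₀)⁻¹ = 1 := tendsto_nhds_unique hlim1 hlim2
        rw [one_mul, inv_eq_one] at this
        exact hyne n₀ this
      · -- k bounded on T: some value of c is attained infinitely often on T
        push_neg at hk2
        obtain ⟨K, hK⟩ := hk2
        have hcover2 : T ⊆ ⋃ i ∈ Set.Iio K, {j ∈ T | k j = i} := by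
          intro j hj
          exact Set.mem_biUnion (hK j hj) ⟨hj, rfl⟩
        have : ∃ i ∈ Set.Iio K, ¬ {j ∈ T | k j = i}.Finite := by
          by_contra hfin
          push_neg at hfin
          exact hTinf (Set.Finite.subset
            ((Set.finite_Iio K).biUnion (fun i hi => hfin i hi)) hcover2)
        obtain ⟨k₀, _, hT'inf⟩ := this
        set v : G := s n₀ k₀ * y n₀ with hv
        have hcv : ∀ j ∈ {j ∈ T | k j = k₀}, c j = v := by
          rintro j ⟨hjT, hjk⟩
          rw [hnk j, hjT, hjk]
        -- v = 1
        have hv1 : v = 1 := by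
          by_contra hvne
          have hUmem : ({v}ᶜ : Set G) ∈ 𝓝 (1 : G) :=
            isOpen_compl_singleton.mem_nhds (by simpa using (Ne.symm hvne))
          obtain ⟨B, hB⟩ := Filter.eventually_atTop.1 (hc_t.eventually hUmem)
          obtain ⟨j, hjmem, hjB⟩ := Set.Infinite.exists_gt hT'inf B
          exact (hB j (le_of_lt hjB)) (by rw [hcv j hjmem]; exact rfl)
        exact (hs_mem n₀ k₀).2
          (Set.mem_singleton_iff.2 (eq_inv_of_mul_eq_one_left hv1))
    -- select witnesses
    have hsel : ∀ m : ℕ, ∃ j, m ≤ j ∧ m ≤ n j := by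
      intro m
      obtain ⟨j, hj⟩ := hub (max m ((Finset.range m).sup n + 1))
      refine ⟨j, ?_, le_trans (le_max_left _ _) hj⟩
      by_contra hlt
      push_neg at hlt
      have h1 : n j ≤ (Finset.range m).sup n := Finset.le_sup (Finset.mem_range.2 hlt)
      have h2 : (Finset.range m).sup n + 1 ≤ n j := le_trans (le_max_right _ _) hj
      omega
    choose jj hjj1 hjj2 using hsel
    refine ⟨fun m => c (jj m) * (y (n (jj m)))⁻¹, ?_, ?_⟩
    · intro m
      show c (jj m) * (y (n (jj m)))⁻¹ ∈ A m
      have h1 := hnk (jj m)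
      rw [h1, mul_inv_cancel_right]
      exact hanti (hjj2 m) ((hs_mem (n (jj m)) (k (jj m))).1.1)
    · have h1 : Filter.Tendsto (fun m => c (jj m)) Filter.atTop (𝓝 1) :=
        hc_t.comp (tendsto_atTop_mono hjj1 tendsto_id)
      have h2 : Filter.Tendsto (fun m => y (n (jj m))) Filter.atTop (𝓝 1) :=
        hy.comp (tendsto_atTop_mono hjj2 tendsto_id)
      simpa using h1.mul h2.inv
  · -- degenerate case: 1 ∈ A n for all n
    push_neg at hc
    obtain ⟨n₀, hn₀⟩ := hc
    have h1A : (1 : G) ∈ A n₀ := by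
      by_contra h
      rw [Set.diff_singleton_eq_self h] at hn₀
      exact hn₀ (hcl n₀)
    have hall : ∀ m, (1 : G) ∈ A m := by
      intro m
      rcases le_total m n₀ with h | h
      · exact hanti h h1A
      · by_contra hm
        have hsub : A m \ {1} ⊆ A n₀ \ {1} := Set.diff_subset_diff_left (hanti h)
        rw [Set.diff_singleton_eq_self hm] at hsub
        exact hn₀ (closure_mono hsub (hcl m))
    exact ⟨fun _ => 1, hall, tendsto_const_nhds⟩



lemma strong_frechet [FrechetUrysohnSpace G] (x : G) (A : ℕ → Set G)
    (hdec : ∀ n, A (n + 1) ⊆ A n) (hcl : ∀ n, x ∈ closure (A n)) :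
    ∃ u : ℕ → G, (∀ n, u n ∈ A n) ∧ Filter.Tendsto u Filter.atTop (𝓝 x) := by
  obtain ⟨u, hu, hut⟩ := strong_frechet_one (G := G) (fun n => (fun g => x⁻¹ * g) '' A n)
    (fun n => Set.image_mono (hdec n))
    (fun n => image_closure_subset_closure_image (continuous_mul_left x⁻¹)
      ⟨x, hcl n, inv_mul_cancel x⟩)
  refine ⟨fun n => x * u n, fun n => ?_, ?_⟩
  · obtain ⟨a, ha, hau⟩ := hu n
    show x * u n ∈ A n
    rw [← hau, mul_inv_cancel_left]
    exact ha
  · simpa using tendsto_const_nhds.mul hut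

lemma nwd_mono {X : Type*} [TopologicalSpace X] {s t : Set X} (h : s ⊆ t)
    (ht : IsNowhereDense t) : IsNowhereDense s := by
  rw [IsNowhereDense] at *
  have h2 := interior_mono (closure_mono h)
  rw [ht] at h2
  exact Set.subset_empty_iff.1 h2

lemma nwd_union {X : Type*} [TopologicalSpace X] {s t : Set X} (hs : IsNowhereDense s)
    (ht : IsNowhereDense t) : IsNowhereDense (s ∪ t) := by
  rw [IsNowhereDense, closure_union, Set.eq_empty_iff_forall_notMem]
  intro x hx
  have hO : IsOpen (interior (closure s ∪ closure t)) := isOpen_interior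
  have h1 : interior (closure s ∪ closure t) \ closure s ⊆ closure t := by
    intro z hz
    rcases interior_subset hz.1 with h | h
    · exact absurd h hz.2
    · exact h
  have h2 : interior (closure s ∪ closure t) \ closure s ⊆ interior (closure t) :=
    ((hO.sdiff isClosed_closure).subset_interior_iff).2 h1
  rw [ht, Set.subset_empty_iff, Set.diff_eq_empty] at h2
  have h3 : interior (closure s ∪ closure t) ⊆ interior (closure s) :=
    hO.subset_interior_iff.2 h2
  rw [hs, Set.subset_empty_iff] at h3
  exact Set.eq_empty_iff_forall_notMem.1 h3 x hx

lemma nwd_biUnion {X : Type*} [TopologicalSpace X] (F : Finset ℕ) (f : ℕ → Set X)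
    (h : ∀ i, IsNowhereDense (f i)) : IsNowhereDense (⋃ i ∈ F, f i) := by
  classical
  induction F using Finset.induction with
  | empty => simpa using isNowhereDense_empty
  | insert _ _ hx ih =>
      rw [Finset.set_biUnion_insert]
      exact nwd_union (h _) ih

/-- complement of a closed nowhere dense set meets every nonempty open set. -/
lemma open_diff_nwd_nonempty {X : Type*} [TopologicalSpace X] {N : Set X} (hNc : IsClosed N)
    (hN : IsNowhereDense N) {O : Set X} (hO : IsOpen O) (hne : O.Nonempty) :
    (O \ N).Nonempty := by
  rw [Set.nonempty_iff_ne_empty]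
  intro h
  rw [Set.diff_eq_empty] at h
  have h2 := hO.subset_interior_iff.2 (h.trans subset_closure)
  rw [IsNowhereDense] at hN
  rw [hN, Set.subset_empty_iff] at h2
  exact (Set.nonempty_iff_ne_empty.1 hne) h2

lemma isOpen_one_of_isOpen_singleton {x : G} (h : IsOpen ({x} : Set G)) :
    IsOpen ({1} : Set G) := by
  have h2 := (Homeomorph.mulLeft x⁻¹).isOpen_image.2 h
  simpa using h2

lemma nwd_singleton {X : Type*} [TopologicalSpace X] [T1Space X] {x : X}
    (h : ¬ IsOpen ({x} : Set X)) : IsNowhereDense ({x} : Set X) := by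
  rw [IsNowhereDense, isClosed_singleton.closure_eq, Set.eq_empty_iff_forall_notMem]
  intro z hz
  have h1 : interior ({x} : Set X) = {x} := by
    apply Set.Subset.antisymm interior_subset
    intro w hw
    rcases interior_subset hz with rfl
    rcases hw with rfl
    exact hz
  exact h (h1 ▸ isOpen_interior)

lemma nwd_finite (hnd : ¬ IsOpen ({1} : Set G)) {A : Set G} (hA : A.Finite) :
    IsNowhereDense A := by
  rw [IsNowhereDense, hA.isClosed.closure_eq, Set.eq_empty_iff_forall_notMem]
  intro x hx
  have h1 : IsOpen (interior A \ (A \ {x})) :=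
    isOpen_interior.sdiff (hA.subset Set.diff_subset).isClosed
  have h2 : interior A \ (A \ {x}) = {x} := by
    apply Set.eq_singleton_iff_unique_mem.2
    refine ⟨⟨hx, fun h => h.2 rfl⟩, ?_⟩
    intro z hz
    by_contra hzx
    exact hz.2 ⟨interior_subset hz.1, hzx⟩
  rw [h2] at h1
  exact hnd (isOpen_one_of_isOpen_singleton h1)

lemma index_set_infinite {X : Type*} {w : ℕ → X} {A : Set X}
    (h : (Set.range w ∩ A).Infinite) : {k | w k ∈ A}.Infinite := by
  intro hfin
  apply h
  have : Set.range w ∩ A ⊆ w '' {k | w k ∈ A} := by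
    rintro z ⟨⟨kk, rfl⟩, hzA⟩
    exact ⟨kk, hzA, rfl⟩
  exact (hfin.image w).subset this

lemma frequently_of_index_infinite {p : ℕ → Prop} (h : {k | p k}.Infinite) :
    ∃ᶠ k in Filter.atTop, p k := by
  rw [Filter.frequently_atTop]
  intro a
  obtain ⟨b, hb, hab⟩ := h.exists_gt a
  exact ⟨b, le_of_lt hab, hb⟩


lemma tame_nwd (G : Type*) [Group G] [TopologicalSpace G] [IsTopologicalGroup G] [T1Space G]
    [Countable G] [FrechetUrysohnSpace G] : Tame (nwdIdeal G) := by
  intro Y hY f J hJid hJhit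
  by_cases hfib : ∃ m, Y ∩ f ⁻¹' {m} ∉ nwdIdeal G
  · obtain ⟨m, hm⟩ := hfib
    exact ⟨{m}, hJid.2.2 {m} (Set.finite_singleton m), hm⟩
  push_neg at hfib
  have hfib' : ∀ m : ℕ, IsNowhereDense (Y ∩ f ⁻¹' {m}) := fun m => hfib m
  set V : Set G := interior (closure Y) with hVdef
  have hVo : IsOpen V := isOpen_interior
  have hVne : V.Nonempty := by
    rw [Set.nonempty_iff_ne_empty]
    intro h
    exact hY h
  have hVY : ∀ O : Set G, IsOpen O → O.Nonempty → O ⊆ V → (O ∩ Y).Nonempty := by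
    intro O hO hOne hOV
    obtain ⟨z, hz⟩ := hOne
    have hzc : z ∈ closure Y := interior_subset (hOV hz)
    exact mem_closure_iff.1 hzc O hO hz
  have hiso : ∀ x ∈ V, ¬ IsOpen ({x} : Set G) := by
    intro x hxV hxo
    have hxY : x ∈ Y := by
      obtain ⟨z, hz1, hz2⟩ := hVY {x} hxo ⟨x, rfl⟩ (Set.singleton_subset_iff.2 hxV)
      rcases hz1 with rfl
      exact hz2
    have h1 : ({x} : Set G) ⊆ closure (Y ∩ f ⁻¹' {f x}) :=
      Set.singleton_subset_iff.2 (subset_closure ⟨hxY, rfl⟩)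
    have h2 : x ∈ interior (closure (Y ∩ f ⁻¹' {f x})) :=
      (hxo.subset_interior_iff.2 h1) rfl
    have h3 := hfib' (f x)
    rw [IsNowhereDense] at h3
    rw [h3] at h2
    exact absurd h2 (Set.notMem_empty x)
  have key : ∀ x ∈ V, ∃ u : ℕ → G, (∀ kk, u kk ∈ Y ∧ kk < f (u kk)) ∧
      Filter.Tendsto u Filter.atTop (𝓝 x) := by
    intro x hxV
    set N : ℕ → Set G := fun kk => (⋃ m ∈ Finset.range (kk + 1), closure (Y ∩ f ⁻¹' {m})) ∪ {x}
      with hNdef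
    have hNc : ∀ kk, IsClosed (N kk) :=
      fun kk => (isClosed_biUnion_finset (fun i _ => isClosed_closure)).union isClosed_singleton
    have hNnwd : ∀ kk, IsNowhereDense (N kk) := by
      intro kk
      exact nwd_union (nwd_biUnion _ _ (fun i => (hfib' i).closure)) (nwd_singleton (hiso x hxV))
    set A : ℕ → Set G := fun kk => (Y ∩ V) \ N kk with hAdef
    have hdec : ∀ kk, A (kk + 1) ⊆ A kk := by
      intro kk
      apply Set.diff_subset_diff_right
      apply Set.union_subset_union_left
      intro z hz
      rw [Set.mem_iUnion₂] at hz ⊢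
      obtain ⟨i, hi, hzi⟩ := hz
      exact ⟨i, Finset.mem_range.2 (by have := Finset.mem_range.1 hi; omega), hzi⟩
    have hclA : ∀ kk, x ∈ closure (A kk) := by
      intro kk
      rw [mem_closure_iff]
      intro O hO hxO
      have h1 : ((O ∩ V) \ N kk).Nonempty :=
        open_diff_nwd_nonempty (hNc kk) (hNnwd kk) (hO.inter hVo) ⟨x, hxO, hxV⟩
      have h2 : (((O ∩ V) \ N kk) ∩ Y).Nonempty :=
        hVY _ ((hO.inter hVo).sdiff (hNc kk)) h1 (fun z hz => hz.1.2)
      obtain ⟨z, hz1, hz2⟩ := h2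
      exact ⟨z, hz1.1.1, ⟨hz2, hz1.1.2⟩, hz1.2⟩
    obtain ⟨u, huA, hut⟩ := strong_frechet x A hdec hclA
    refine ⟨u, fun kk => ⟨(huA kk).1.1, ?_⟩, hut⟩
    by_contra hle
    push_neg at hle
    refine (huA kk).2 (Set.mem_union_left _ ?_)
    exact Set.mem_iUnion₂.2 ⟨f (u kk), Finset.mem_range.2 (by omega),
      subset_closure ⟨(huA kk).1.1, rfl⟩⟩
  choose! u hu1 hut using key
  obtain ⟨e, he⟩ := Set.Countable.exists_eq_range (Set.to_countable V) hVne
  have heV : ∀ i, e i ∈ V := by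
    intro i
    rw [he]
    exact Set.mem_range_self i
  set Z : ℕ → Set ℕ := fun i => Set.range (fun kk => f (u (e i) kk)) with hZdef
  have hZinf : ∀ i, (Z i).Infinite := by
    intro i
    apply Set.infinite_of_not_bddAbove
    rintro ⟨M, hM⟩
    have h1 := (hu1 (e i) (heV i) M).2
    have h2 : f (u (e i) M) ≤ M := hM (Set.mem_range_self M)
    omega
  obtain ⟨j, hjJ, hjZ⟩ := hJhit Z hZinf
  refine ⟨j, hjJ, ?_⟩
  intro hmem
  have hmem' : interior (closure (Y ∩ f ⁻¹' j)) = ∅ := by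
    have := hmem
    rwa [nwdIdeal, Set.mem_setOf_eq, IsNowhereDense] at this
  have hVsub : V ⊆ closure (Y ∩ f ⁻¹' j) := by
    intro x hxV
    obtain ⟨i, rfl⟩ : ∃ i, e i = x := by rw [he] at hxV; exact hxV
    have hfreq : ∃ᶠ kk in Filter.atTop, u (e i) kk ∈ Y ∩ f ⁻¹' j := by
      apply frequently_of_index_infinite
      apply Set.Infinite.mono (s := {kk | f (u (e i) kk) ∈ j})
      · intro kk hkk
        exact ⟨(hu1 (e i) (heV i) kk).1, hkk⟩
      · exact index_set_infinite (hjZ i)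
    exact mem_closure_of_frequently_of_tendsto hfreq (hut (e i) (heV i))
  have h2 : V ⊆ interior (closure (Y ∩ f ⁻¹' j)) := hVo.subset_interior_iff.2 hVsub
  rw [hmem', Set.subset_empty_iff] at h2
  exact (Set.nonempty_iff_ne_empty.1 hVne) h2

lemma isIdeal_nwd (hnd : ¬ IsOpen ({1} : Set G)) : IsIdeal (nwdIdeal G) := by
  refine ⟨fun A B hAB hB => nwd_mono hAB hB, fun A hA B hB => nwd_union hA hB, fun A hA => ?_⟩
  have : ∀ x : G, ¬ IsOpen ({x} : Set G) := by
    intro x hx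
    exact hnd (isOpen_one_of_isOpen_singleton hx)
  show IsNowhereDense A
  rw [IsNowhereDense, hA.isClosed.closure_eq, Set.eq_empty_iff_forall_notMem]
  intro x hx
  have h1 : IsOpen (interior A \ (A \ {x})) :=
    isOpen_interior.sdiff (hA.subset Set.diff_subset).isClosed
  have h2 : interior A \ (A \ {x}) = {x} := by
    apply Set.eq_singleton_iff_unique_mem.2
    refine ⟨⟨hx, fun h => h.2 rfl⟩, ?_⟩
    intro z hz
    by_contra hzx
    exact hz.2 ⟨interior_subset hz.1, hzx⟩
  rw [h2] at h1
  exact this x h1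

lemma weaklyClosed_nwd : WeaklyClosed (nwdIdeal G) := by
  intro A C hC
  constructor
  · intro hA
    have hAnwd : IsNowhereDense A := hA
    have hB : {x : G | ((fun c => c * x) '' C \ A).Finite} ⊆ closure A := by
      intro x hx
      rw [mem_closure_iff]
      intro O hO hxO
      have h1 : {c | c ∈ C ∧ c * x ∉ O}.Finite := by
        have hW : (C \ (fun g => g * x) ⁻¹' O).Finite := by
          apply hC.2
          have : IsOpen ((fun g : G => g * x) ⁻¹' O) := (continuous_mul_right x).isOpen_preimage O hO
          apply this.mem_nhds
          simpa using hxO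
        apply hW.subset
        rintro c ⟨hc1, hc2⟩
        exact ⟨hc1, hc2⟩
      have h2 : {c | c ∈ C ∧ c * x ∉ A}.Finite := by
        have himg : (fun c : G => c * x) '' {c | c ∈ C ∧ c * x ∉ A} ⊆
            (fun c : G => c * x) '' C \ A := by
          rintro z ⟨c, ⟨hc1, hc2⟩, rfl⟩
          exact ⟨⟨c, hc1, rfl⟩, hc2⟩
        exact Set.Finite.of_finite_image (hx.subset himg) (mul_left_injective x).injOn
      have h3 : (C \ ({c | c ∈ C ∧ c * x ∉ O} ∪ {c | c ∈ C ∧ c * x ∉ A})).Nonempty :=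
        (hC.1.diff (h1.union h2)).nonempty
      obtain ⟨c, hcC, hc2⟩ := h3
      rw [Set.mem_union] at hc2
      push_neg at hc2
      have hcO : c * x ∈ O := by
        by_contra h
        exact hc2.1 ⟨hcC, h⟩
      have hcA : c * x ∈ A := by
        by_contra h
        exact hc2.2 ⟨hcC, h⟩
      exact ⟨c * x, hcO, hcA⟩
    show IsNowhereDense _
    exact nwd_mono (Set.union_subset subset_closure hB) hAnwd.closure
  · intro h
    exact nwd_mono Set.subset_union_left h

lemma invariant_nwd : InvariantIdeal (nwdIdeal G) := by
  intro A hA g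
  have hAnwd : IsNowhereDense A := hA
  have himg : ∀ e : G ≃ₜ G, IsNowhereDense (⇑e '' A) := by
    intro e
    rw [IsNowhereDense, ← e.image_closure, ← e.image_interior]
    rw [IsNowhereDense] at hAnwd
    rw [hAnwd, Set.image_empty]
  refine ⟨?_, ?_, ?_⟩
  · show IsNowhereDense _
    simpa using himg (Homeomorph.mulLeft g)
  · show IsNowhereDense _
    simpa using himg (Homeomorph.mulRight g)
  · show IsNowhereDense _
    simpa using himg (Homeomorph.inv G)

lemma groomed_of_nondiscrete (hnd : ¬ IsOpen ({1} : Set G)) [FrechetUrysohnSpace G] :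
    Groomed G := by
  rintro ⟨D, hD, hE⟩
  have h1 : (1 : G) ∈ closure (D \ {1}) := by
    rw [mem_closure_iff]
    intro O hO hO1
    have hOne : (O \ {1}).Nonempty := by
      by_contra h
      rw [Set.not_nonempty_iff_eq_empty, Set.diff_eq_empty] at h
      exact hnd ((Set.Subset.antisymm h (Set.singleton_subset_iff.2 hO1)) ▸ hO)
    obtain ⟨z, hz1, hz2⟩ := hD.inter_open_nonempty _ (hO.sdiff isClosed_singleton) hOne
    exact ⟨z, hz1.1, hz2, hz1.2⟩
  obtain ⟨w, hw_mem, hwt⟩ := mem_closure_iff_seq_limit.1 h1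
  have hinf : (Set.range w).Infinite :=
    range_infinite_of_tendsto_ne hwt (fun k => fun h => (hw_mem k).2 (h ▸ rfl))
  obtain ⟨A, hAD, hA1, hAZ⟩ := hE 1 (fun _ => Set.range w)
    (fun _ => ⟨by rintro g ⟨kk, rfl⟩; exact (hw_mem kk).1, hinf⟩)
  apply hA1
  apply mem_closure_of_frequently_of_tendsto _ hwt
  exact frequently_of_index_infinite (index_set_infinite (hAZ 0))

lemma not_captures (hnd : ¬ IsOpen ({1} : Set G)) [FrechetUrysohnSpace G] :
    ¬ CapturesConvSeqs (nwdIdeal G) := by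
  rintro ⟨S, hSc, hSnwd, hScap⟩
  obtain ⟨eS, heS⟩ := Set.Countable.exists_eq_range (hSc.union (Set.countable_singleton ∅))
    ⟨∅, Set.mem_union_right _ rfl⟩
  have heSnwd : ∀ i, IsNowhereDense (eS i) := by
    intro i
    have : eS i ∈ S ∪ {∅} := by rw [heS]; exact Set.mem_range_self i
    rcases (Set.mem_union _ _ _).1 this with h | h
    · exact hSnwd h
    · rw [Set.mem_singleton_iff] at h
      rw [h]; exact isNowhereDense_empty
  set N : ℕ → Set G := fun kk => (⋃ i ∈ Finset.range (kk + 1), closure (eS i)) ∪ {1} with hNdef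
  have hNc : ∀ kk, IsClosed (N kk) :=
    fun kk => (isClosed_biUnion_finset (fun i _ => isClosed_closure)).union isClosed_singleton
  have hNnwd : ∀ kk, IsNowhereDense (N kk) :=
    fun kk => nwd_union (nwd_biUnion _ _ (fun i => (heSnwd i).closure)) (nwd_singleton hnd)
  set A : ℕ → Set G := fun kk => (N kk)ᶜ with hAdef
  have hdec : ∀ kk, A (kk + 1) ⊆ A kk := by
    intro kk
    apply Set.compl_subset_compl.2
    apply Set.union_subset_union_left
    intro z hz
    rw [Set.mem_iUnion₂] at hz ⊢
    obtain ⟨i, hi, hzi⟩ := hz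
    exact ⟨i, Finset.mem_range.2 (by have := Finset.mem_range.1 hi; omega), hzi⟩
  have hclA : ∀ kk, (1 : G) ∈ closure (A kk) := by
    intro kk
    rw [mem_closure_iff]
    intro O hO hO1
    obtain ⟨z, hz⟩ := open_diff_nwd_nonempty (hNc kk) (hNnwd kk) hO ⟨1, hO1⟩
    exact ⟨z, hz.1, hz.2⟩
  obtain ⟨uu, huA, hut⟩ := strong_frechet 1 A hdec hclA
  have hune : ∀ kk, uu kk ≠ 1 := by
    intro kk h
    exact (huA kk) (Set.mem_union_right _ (by rw [h]; rfl))
  set C : Set G := Set.range uu with hCdef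
  have hCconv : IsConvSeqTo C 1 := by
    refine ⟨range_infinite_of_tendsto_ne hut hune, ?_⟩
    intro U hU
    obtain ⟨K, hK⟩ := Filter.eventually_atTop.1 (hut.eventually hU)
    apply Set.Finite.subset ((Set.finite_Iio K).image uu)
    rintro z ⟨⟨kk, rfl⟩, hz2⟩
    refine ⟨kk, ?_, rfl⟩
    rw [Set.mem_Iio]
    by_contra h
    push_neg at h
    exact hz2 (hK kk h)
  obtain ⟨B, hBS, hBinf⟩ := hScap C 1 hCconv
  obtain ⟨i, hi⟩ : ∃ i, eS i = B := by
    have : B ∈ Set.range eS := by rw [← heS]; exact Set.mem_union_left _ hBS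
    exact this
  apply hBinf
  apply Set.Finite.subset ((Set.finite_Iio i).image uu)
  rintro z ⟨⟨kk, rfl⟩, hz2⟩
  refine ⟨kk, ?_, rfl⟩
  rw [Set.mem_Iio]
  by_contra h
  push_neg at h
  refine (huA kk) (Set.mem_union_left _ ?_)
  exact Set.mem_iUnion₂.2 ⟨i, Finset.mem_range.2 (by omega), hi ▸ subset_closure hz2⟩

lemma firstCountable_of_nhds_one_countably_generated
    (hgen : (𝓝 (1 : G)).IsCountablyGenerated) : FirstCountableTopology G := by
  refine ⟨fun x => ?_⟩
  rw [← map_mul_left_nhds_one x]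
  haveI := hgen
  infer_instance

lemma firstCountable_of_piNetwork (h2 : HasAlmostPiNetwork (nwdIdeal G)) :
    FirstCountableTopology G := by
  obtain ⟨H, hHc, hHpos, hHnet⟩ := h2
  -- π-base step
  have step : ∀ U ∈ 𝓝 (1 : G), ∃ H₀ ∈ H, (interior (closure H₀)).Nonempty ∧
      interior (closure H₀) ⊆ U := by
    intro U hU
    obtain ⟨W, hWn, hWc, hWU⟩ := exists_mem_nhds_isClosed_subset hU
    have hIW1 : (1 : G) ∈ interior W := mem_interior_iff_mem_nhds.2 hWn
    obtain ⟨H₀, hH₀, hH₀nwd⟩ := hHnet (interior W) isOpen_interior ⟨1, hIW1⟩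
    have hH₀nwd' : IsNowhereDense (H₀ \ interior W) := hH₀nwd
    have hne : (interior (closure H₀)).Nonempty := by
      rw [Set.nonempty_iff_ne_empty]
      exact fun h => hHpos H₀ hH₀ h
    refine ⟨H₀, hH₀, hne, ?_⟩
    have hsplit : closure H₀ ⊆ closure (H₀ ∩ interior W) ∪ closure (H₀ \ interior W) := by
      rw [← closure_union]
      apply closure_mono
      intro z hz
      by_cases h : z ∈ interior W
      · exact Or.inl ⟨hz, h⟩
      · exact Or.inr ⟨hz, h⟩
    have hO2 : interior (closure H₀) \ closure (H₀ ∩ interior W) ⊆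
        interior (closure (H₀ \ interior W)) := by
      apply (isOpen_interior.sdiff isClosed_closure).subset_interior_iff.2
      intro z hz
      rcases hsplit (interior_subset hz.1) with h | h
      · exact absurd h hz.2
      · exact h
    have hO2' : interior (closure H₀) ⊆ closure (H₀ ∩ interior W) := by
      intro z hz
      by_contra h
      have hmem := hO2 ⟨hz, h⟩
      have hnwd2 : IsNowhereDense (closure (H₀ \ interior W)) := hH₀nwd'.closure
      rw [IsNowhereDense, closure_closure] at hnwd2
      rw [hnwd2] at hmem
      exact absurd hmem (Set.notMem_empty z)
    calc interior (closure H₀) ⊆ closure (H₀ ∩ interior W) := hO2'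
      _ ⊆ closure W := closure_mono (fun z hz => interior_subset hz.2)
      _ = W := hWc.closure_eq
      _ ⊆ U := hWU

  classical
  set T : Set (Set G) := {H₀ ∈ H | (interior (closure H₀)).Nonempty} with hT
  have hTc : T.Countable := hHc.mono (fun a ha => ha.1)
  have hpick : ∀ H₀ ∈ T, ∃ q : G, q ∈ interior (closure H₀) := fun H₀ h => h.2
  choose! p hp using hpick
  set Sfam : Set (Set G) := (fun H₀ => (fun g => (p H₀)⁻¹ * g) '' interior (closure H₀)) '' T
    with hSfam
  have hScount : Sfam.Countable := hTc.image _
  have hSnhds : ∀ s ∈ Sfam, s ∈ 𝓝 (1 : G) := by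
    rintro s ⟨H₀, hH₀T, rfl⟩
    apply IsOpen.mem_nhds
    · have := (Homeomorph.mulLeft (p H₀)⁻¹).isOpen_image.2 (isOpen_interior
        (s := closure H₀))
      simpa using this
    · exact ⟨p H₀, hp H₀ hH₀T, inv_mul_cancel _⟩
  have hSbase : ∀ U ∈ 𝓝 (1 : G), ∃ s ∈ Sfam, s ⊆ U := by
    intro U hU
    obtain ⟨V₀, hV₀o, hV₀1, hV₀V₀⟩ := exists_open_nhds_one_mul_subset hU
    set V : Set G := V₀ ∩ (fun g : G => g⁻¹) ⁻¹' V₀ with hV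
    have hVo : IsOpen V := hV₀o.inter (continuous_inv.isOpen_preimage _ hV₀o)
    have hV1 : (1 : G) ∈ V := ⟨hV₀1, by simpa using hV₀1⟩
    obtain ⟨H₀, hH₀, hne, hsub⟩ := step V (hVo.mem_nhds hV1)
    have hH₀T : H₀ ∈ T := ⟨hH₀, hne⟩
    refine ⟨_, ⟨H₀, hH₀T, rfl⟩, ?_⟩
    rintro z ⟨o, ho, rfl⟩
    have hpV : p H₀ ∈ V := hsub (hp H₀ hH₀T)
    have h1 : (p H₀)⁻¹ ∈ V₀ := hpV.2
    have h2 : o ∈ V₀ := (hsub ho).1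
    exact hV₀V₀ (Set.mul_mem_mul h1 h2)
  apply firstCountable_of_nhds_one_countably_generated
  have hbasis : (𝓝 (1 : G)).HasBasis (fun s : Set G => s ∈ Sfam) id := by
    constructor
    intro t
    constructor
    · intro ht
      obtain ⟨s, hs1, hs2⟩ := hSbase t ht
      exact ⟨s, hs1, hs2⟩
    · rintro ⟨s, hs1, hs2⟩
      exact Filter.mem_of_superset (hSnhds s hs1) hs2
  exact Filter.HasCountableBasis.isCountablyGenerated ⟨hbasis, hScount⟩

lemma main_lemma (hIIA : IIA) (G : Type) [Group G] [TopologicalSpace G] [IsTopologicalGroup G]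
    [T1Space G] [Countable G] [FrechetUrysohnSpace G] : FirstCountableTopology G := by
  by_cases hnd : IsOpen ({1} : Set G)
  · haveI : DiscreteTopology G := discreteTopology_iff_isOpen_singleton.2 (fun x => by
      have := (Homeomorph.mulLeft x).isOpen_image.2 hnd
      simpa using this)
    infer_instance
  · rcases hIIA G (groomed_of_nondiscrete hnd) (nwdIdeal G) (isIdeal_nwd hnd) (tame_nwd G)
      weaklyClosed_nwd invariant_nwd with h1 | h2
    · exact absurd h1 (not_captures hnd)
    · exact firstCountable_of_piNetwork h2

lemma main_lemma' (hIIA : IIA) (D : Type*) [Group D] [TopologicalSpace D] [IsTopologicalGroup D]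
    [T1Space D] [Countable D] [FrechetUrysohnSpace D] : FirstCountableTopology D := by
  haveI : Small.{0} D := Countable.toSmall D
  let e : Shrink.{0} D ≃* D := Shrink.mulEquiv
  letI : TopologicalSpace (Shrink.{0} D) := TopologicalSpace.induced (⇑e) inferInstance
  have hind : Topology.IsInducing (⇑e) := ⟨rfl⟩
  have hcont : Continuous (⇑e) := continuous_induced_dom
  haveI : ContinuousMul (Shrink.{0} D) := by
    refine ⟨?_⟩
    rw [continuous_induced_rng]
    have heq : (⇑e ∘ fun q : Shrink.{0} D × Shrink.{0} D => q.1 * q.2) =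
        fun q : Shrink.{0} D × Shrink.{0} D => e q.1 * e q.2 :=
      funext fun q => map_mul e _ _
    rw [heq]
    exact (hcont.comp continuous_fst).mul (hcont.comp continuous_snd)
  haveI : ContinuousInv (Shrink.{0} D) := by
    refine ⟨?_⟩
    rw [continuous_induced_rng]
    have heq : (⇑e ∘ fun q : Shrink.{0} D => q⁻¹) = fun q : Shrink.{0} D => (e q)⁻¹ :=
      funext fun q => map_inv e _
    rw [heq]
    exact hcont.inv
  haveI : IsTopologicalGroup (Shrink.{0} D) := ⟨⟩
  haveI : T1Space (Shrink.{0} D) :=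
    Topology.IsEmbedding.t1Space ⟨hind, e.injective⟩
  haveI : FrechetUrysohnSpace (Shrink.{0} D) := hind.frechetUrysohnSpace
  haveI : Countable (Shrink.{0} D) := Countable.of_equiv D (equivShrink D)
  haveI hfc : FirstCountableTopology (Shrink.{0} D) := main_lemma hIIA (Shrink.{0} D)
  let h : Shrink.{0} D ≃ₜ D := Equiv.toHomeomorphOfIsInducing e.toEquiv hind
  refine ⟨fun x => ?_⟩
  have hmap : 𝓝 x = Filter.map (⇑h) (𝓝 (h.symm x)) := by
    rw [h.map_nhds_eq, h.apply_symm_apply]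
  rw [hmap]
  infer_instance

lemma countable_subgroup_closure {G : Type*} [Group G] {s : Set G} (hs : s.Countable) :
    Set.Countable ((Subgroup.closure s : Subgroup G) : Set G) := by
  classical
  have hsinv : (s⁻¹ : Set G).Countable := by
    rw [← Set.image_inv_eq_inv]
    exact hs.image _
  have hs' : (s ∪ s⁻¹).Countable := hs.union hsinv
  haveI := hs'.to_subtype
  apply Set.Countable.mono ?_ (Set.countable_range
    (fun l : List ↥(s ∪ s⁻¹) => (l.map Subtype.val).prod))
  intro x hx
  have hx' : x ∈ Submonoid.closure (s ∪ s⁻¹) := by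
    rw [← Subgroup.closure_toSubmonoid]
    exact hx
  obtain ⟨l, hl, hlp⟩ := Submonoid.exists_list_of_mem_closure hx'
  refine ⟨l.attach.map (fun y => ⟨y.1, hl y.1 y.2⟩), ?_⟩
  show (List.map Subtype.val (List.map
      (fun y : {y // y ∈ l} => (⟨y.1, hl y.1 y.2⟩ : ↥(s ∪ s⁻¹))) l.attach)).prod = x
  rw [List.map_map]
  have heq : (Subtype.val ∘ fun y : {y // y ∈ l} => (⟨y.1, hl y.1 y.2⟩ : ↥(s ∪ s⁻¹))) =
      fun y : {y // y ∈ l} => (y : G) := rfl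
  rw [heq, List.attach_map_subtype_val]
  exact hlp

lemma firstCountable_of_dense_subgroup {G : Type*} [Group G] [TopologicalSpace G]
    [IsTopologicalGroup G] [T1Space G] (D : Subgroup G) (hD : Dense (D : Set G))
    [FirstCountableTopology ↥D] : FirstCountableTopology G := by
  obtain ⟨B, hB⟩ := (𝓝 (1 : ↥D)).exists_antitone_basis
  have hmem : ∀ n, B n ∈ 𝓝 (1 : ↥D) := fun n => hB.toHasBasis.mem_of_mem trivial
  have hW : ∀ n, ∃ W : Set G, W ∈ 𝓝 (1 : G) ∧ Subtype.val ⁻¹' W ⊆ B n := by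
    intro n
    have h1 : B n ∈ Filter.comap (Subtype.val : ↥D → G) (𝓝 ((1 : ↥D) : G)) := by
      rw [← nhds_subtype]
      exact hmem n
    rw [Filter.mem_comap] at h1
    obtain ⟨W, hW1, hW2⟩ := h1
    exact ⟨W, by simpa using hW1, hW2⟩
  choose W hWn hWB using hW
  set sfam : ℕ → Set G := fun n => interior (closure (interior (W n) ∩ (D : Set G)))
    with hsfam
  have hs_nhds : ∀ n, sfam n ∈ 𝓝 (1 : G) := by
    intro n
    have h1 : (1 : G) ∈ interior (W n) := mem_interior_iff_mem_nhds.2 (hWn n)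
    have h2 : interior (W n) ⊆ closure (interior (W n) ∩ (D : Set G)) :=
      hD.open_subset_closure_inter isOpen_interior
    have h3 : interior (W n) ⊆ sfam n := isOpen_interior.subset_interior_iff.2 h2
    exact isOpen_interior.mem_nhds (h3 h1)
  have hs_base : ∀ U ∈ 𝓝 (1 : G), ∃ n, sfam n ⊆ U := by
    intro U hU
    obtain ⟨U', hU'n, hU'c, hU'U⟩ := exists_mem_nhds_isClosed_subset hU
    have hpre : (Subtype.val : ↥D → G) ⁻¹' interior U' ∈ 𝓝 (1 : ↥D) := by
      rw [nhds_subtype]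
      apply Filter.preimage_mem_comap
      have : ((1 : ↥D) : G) = (1 : G) := rfl
      rw [this]
      exact interior_mem_nhds.2 hU'n
    obtain ⟨n, -, hn⟩ := hB.toHasBasis.mem_iff.1 hpre
    refine ⟨n, ?_⟩
    have hsub : interior (W n) ∩ (D : Set G) ⊆ U' := by
      rintro d ⟨hdW, hdD⟩
      have h1 : (⟨d, hdD⟩ : ↥D) ∈ B n := hWB n (Set.mem_preimage.2 (interior_subset hdW))
      have h2 := hn h1
      exact interior_subset h2
    calc sfam n ⊆ closure (interior (W n) ∩ (D : Set G)) := interior_subset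
      _ ⊆ closure U' := closure_mono hsub
      _ = U' := hU'c.closure_eq
      _ ⊆ U := hU'U
  apply firstCountable_of_nhds_one_countably_generated
  have hbasis : (𝓝 (1 : G)).HasBasis (fun _ : ℕ => True) sfam := by
    constructor
    intro t
    constructor
    · intro ht
      obtain ⟨n, hn⟩ := hs_base t ht
      exact ⟨n, trivial, hn⟩
    · rintro ⟨n, -, hn⟩
      exact Filter.mem_of_superset (hs_nhds n) hn
  exact hbasis.isCountablyGenerated

end Aux

/-- Under IIA, the product of at most countably many separable
Fréchet topological groups is Fréchet. -/
theorem statement13 (hIIA : IIA) (ι : Type*) [Countable ι] (G : ι → Type*)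
    [∀ i, Group (G i)] [∀ i, TopologicalSpace (G i)] [∀ i, IsTopologicalGroup (G i)]
    [∀ i, T1Space (G i)] [∀ i, SeparableSpace (G i)]
    [∀ i, FrechetUrysohnSpace (G i)] :
    FrechetUrysohnSpace (∀ i, G i) := by
  haveI hfc : ∀ i, FirstCountableTopology (G i) := by
    intro i
    obtain ⟨s, hsc, hsd⟩ := TopologicalSpace.exists_countable_dense (G i)
    set D : Subgroup (G i) := Subgroup.closure s with hDdef
    have hDd : Dense (D : Set (G i)) := hsd.mono Subgroup.subset_closure
    haveI : Countable ↥D := (countable_subgroup_closure hsc).to_subtype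
    haveI : FirstCountableTopology ↥D := main_lemma' hIIA ↥D
    exact firstCountable_of_dense_subgroup D hDd
  infer_instance
end

section
/- A countable sequential T1 topological group is Fréchet if and only if it does not contain a closed subspace homeomorphic to the sequential fan S(ω). -/
open Set Filter Topology TopologicalSpace

/-- The underlying type of the sequential fan `S(ω)`: the spokes' points
`some (n, m)` together with the apex `none`. -/
def SeqFan : Type := Option (ℕ × ℕ)

/-- The fan topology: every point `some (n, m)` is isolated, and a set
containing the apex is open iff it contains all but finitely many points of
each spoke.  This is the quotient of a countable topological sum of convergent
sequences obtained by identifying their limit points. -/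
instance : TopologicalSpace SeqFan where
  IsOpen U := none ∈ U → ∀ n : ℕ, {m : ℕ | some (n, m) ∉ U}.Finite
  isOpen_univ := by
    intro _ n
    exact Set.finite_empty.subset (fun m hm => absurd (Set.mem_univ _) hm)
  isOpen_inter := by
    intro U V hU hV hUV n
    apply Set.Finite.subset ((hU hUV.1 n).union (hV hUV.2 n))
    intro m hm
    simp only [Set.mem_setOf_eq, Set.mem_inter_iff, Set.mem_union] at hm ⊢
    tauto
  isOpen_sUnion := by
    intro S hS hmem n
    obtain ⟨U, hUS, hnU⟩ := hmem
    apply Set.Finite.subset (hS U hUS hnU n)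
    intro m hm
    simp only [Set.mem_setOf_eq] at hm ⊢
    intro hmU
    exact hm ⟨U, hUS, hmU⟩

namespace St18

/-- `D` converges to `p` as a set. -/
def CS {X : Type*} [TopologicalSpace X] (D : Set X) (p : X) : Prop :=
  ∀ U ∈ 𝓝 p, (D \ U).Finite

variable {X : Type*} [TopologicalSpace X]

theorem CS.mono {D E : Set X} {p : X} (h : CS E p) (hDE : D ⊆ E) : CS D p :=
  fun U hU => (h U hU).subset (diff_subset_diff_left hDE)

theorem cs_of_tendsto {u : ℕ → X} {p : X} (h : Tendsto u atTop (𝓝 p)) :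
    CS (range u) p := by
  intro U hU
  obtain ⟨N, hN⟩ := eventually_atTop.mp (mem_map.mp (h hU))
  refine ((Set.finite_Iio N).image u).subset ?_
  rintro x ⟨⟨n, rfl⟩, hxU⟩
  refine ⟨n, ?_, rfl⟩
  by_contra hn
  exact hxU (hN n (not_lt.mp (by simpa using hn)))

theorem mem_range_of_tendsto_of_finite [T1Space X] {u : ℕ → X} {p : X}
    (h : Tendsto u atTop (𝓝 p)) (hf : (range u).Finite) : p ∈ range u := by
  have h1 : ¬ ∀ x ∈ range u, {n | u n = x}.Finite := by
    intro hall
    have : (Set.univ : Set ℕ).Finite := by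
      refine (hf.biUnion hall).subset fun n _ => ?_
      exact mem_biUnion ⟨n, rfl⟩ rfl
    exact Set.infinite_univ this
  push_neg at h1
  obtain ⟨x, hx, hfib⟩ := h1
  have hpx : p = x := by
    by_contra hne
    have hev : ∀ᶠ n in atTop, u n ∈ ({x}ᶜ : Set X) :=
      mem_map.mp (h (isOpen_compl_singleton.mem_nhds hne))
    obtain ⟨N, hN⟩ := eventually_atTop.mp hev
    refine hfib ((Set.finite_Iio N).subset fun n hn => ?_)
    by_contra hge
    exact (hN n (not_lt.mp (by simpa using hge))) (by simpa using hn)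
  exact hpx ▸ hx

theorem cs_unique [T2Space X] {D : Set X} {p q : X} (hD : D.Infinite)
    (hp : CS D p) (hq : CS D q) : p = q := by
  by_contra hne
  obtain ⟨U, V, hU, hV, hpU, hqV, hUV⟩ := t2_separation hne
  refine hD (((hp U (hU.mem_nhds hpU)).union (hq V (hV.mem_nhds hqV))).subset ?_)
  intro x hx
  by_cases hxU : x ∈ U
  · exact Or.inr ⟨hx, fun hxV => (Set.disjoint_iff.mp hUV) ⟨hxU, hxV⟩⟩
  · exact Or.inl ⟨hx, hxU⟩

theorem CS.image {Y : Type*} [TopologicalSpace Y] (h : X ≃ₜ Y) {D : Set X} {p : X}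
    (hD : CS D p) : CS (h '' D) (h p) := by
  intro U hU
  have hpre : h ⁻¹' U ∈ 𝓝 p := h.continuous.continuousAt.preimage_mem_nhds hU
  have : h '' D \ U = h '' (D \ h ⁻¹' U) := by
    rw [Set.image_diff h.injective, Set.image_preimage_eq U h.surjective]
  rw [this]
  exact (hD _ hpre).image h

theorem cs_enum {Z : Set X} (hZc : Z.Countable) (hZ : Z.Infinite) {p : X}
    (hcs : CS Z p) :
    ∃ u : ℕ → X, Function.Injective u ∧ range u = Z ∧ Tendsto u atTop (𝓝 p) := by
  haveI := hZc.to_subtype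
  haveI := hZ.to_subtype
  obtain ⟨e⟩ : Nonempty (ℕ ≃ Z) := nonempty_equiv_of_countable
  refine ⟨fun n => (e n : X), fun a b hab => e.injective (Subtype.coe_injective hab), ?_, ?_⟩
  · ext x
    constructor
    · rintro ⟨n, rfl⟩; exact (e n).2
    · intro hx; exact ⟨e.symm ⟨x, hx⟩, by simp⟩
  · rw [tendsto_def]
    intro U hU
    rw [mem_atTop_sets]
    have hfin : ({n : ℕ | (e n : X) ∉ U}).Finite := by
      have : ({n : ℕ | (e n : X) ∉ U}) ⊆ (fun n => (e n : X)) ⁻¹' (Z \ U) := by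
        intro n hn; exact ⟨(e n).2, hn⟩
      exact ((hcs U hU).preimage
        (Function.Injective.injOn (fun a b hab => e.injective (Subtype.coe_injective hab)))).subset this
    obtain ⟨N, hN⟩ := hfin.bddAbove
    refine ⟨N + 1, fun n hn => ?_⟩
    by_contra hnot
    exact absurd (hN hnot) (by omega)

end St18

def SeqFan.apex : SeqFan := none

def SeqFan.pt (n m : ℕ) : SeqFan := some (n, m)

theorem SeqFan.pt_injective : Function.Injective (fun q : ℕ × ℕ => SeqFan.pt q.1 q.2) := by
  intro a b hab
  exact Option.some_injective _ hab

theorem SeqFan.pt_ne_apex (n m : ℕ) : SeqFan.pt n m ≠ SeqFan.apex := by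
  intro h
  exact Option.some_ne_none (n, m) h

theorem SeqFan.cases (x : SeqFan) : x = SeqFan.apex ∨ ∃ n m, x = SeqFan.pt n m := by
  cases x with
  | none => exact Or.inl rfl
  | some q => exact Or.inr ⟨q.1, q.2, rfl⟩

namespace St18

theorem seqFan_isOpen_iff {U : Set SeqFan} :
    IsOpen U ↔ (SeqFan.apex ∈ U → ∀ n : ℕ, {m : ℕ | SeqFan.pt n m ∉ U}.Finite) := Iff.rfl

theorem seqFan_tendsto_spoke (n : ℕ) :
    Tendsto (fun m => SeqFan.pt n m) atTop (𝓝 SeqFan.apex) := by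
  rw [tendsto_def]
  intro U hU
  obtain ⟨V, hVU, hVo, hnV⟩ := mem_nhds_iff.mp hU
  have hfin : {m : ℕ | SeqFan.pt n m ∉ V}.Finite := (seqFan_isOpen_iff.mp hVo) hnV n
  obtain ⟨N, hN⟩ := hfin.bddAbove
  rw [mem_atTop_sets]
  refine ⟨N + 1, fun m hm => ?_⟩
  by_contra hnot
  have : SeqFan.pt n m ∉ V := fun hmem => hnot (hVU hmem)
  exact absurd (hN this) (by omega)

variable {G : Type*} [Group G] [TopologicalSpace G] [IsTopologicalGroup G]

theorem cs_mul_left {D : Set G} {p : G} (g : G) (hD : CS D p) :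
    CS ((fun y => g * y) '' D) (g * p) := hD.image (Homeomorph.mulLeft g)

theorem cs_mul_inv_right {D : Set G} {p : G} (v : G) (hD : CS D p) :
    CS ((fun y => v * y⁻¹) '' D) (v * p⁻¹) := by
  have := (hD.image (Homeomorph.inv G)).image (Homeomorph.mulLeft v)
  rw [Set.image_image] at this
  exact this

theorem cs_inv_mul_right {D : Set G} {p : G} (v : G) (hD : CS D p) :
    CS ((fun y => y⁻¹ * v) '' D) (p⁻¹ * v) := by
  have := (hD.image (Homeomorph.inv G)).image (Homeomorph.mulRight v)
  rw [Set.image_image] at this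
  exact this

/-- Splitting lemma for neighborhoods of 1. -/
theorem nhds_one_split {U : Set G} (hU : U ∈ 𝓝 (1 : G)) :
    ∃ V : Set G, IsOpen V ∧ (1 : G) ∈ V ∧ ∀ v ∈ V, ∀ w ∈ V, v * w ∈ U := by
  obtain ⟨V, hVo, hV1, hVV⟩ := exists_open_nhds_one_mul_subset hU
  exact ⟨V, hVo, hV1, fun v hv w hw => hVV (Set.mul_mem_mul hv hw)⟩

theorem nhds_one_split_inv {U : Set G} (hU : U ∈ 𝓝 (1 : G)) :
    ∃ V : Set G, IsOpen V ∧ (1 : G) ∈ V ∧ ∀ v ∈ V, ∀ w ∈ V, v⁻¹ * w ∈ U := by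
  have hcont : Tendsto (fun z : G × G => z.1⁻¹ * z.2) (𝓝 ((1 : G), (1 : G))) (𝓝 (1 : G)) := by
    have := ((continuous_fst.inv.mul continuous_snd : Continuous (fun z : G × G => z.1⁻¹ * z.2))).tendsto ((1 : G), (1 : G))
    refine this.mono_right (le_of_eq ?_)
    show 𝓝 ((1 : G)⁻¹ * 1) = 𝓝 1
    simp
  have hpre : (fun z : G × G => z.1⁻¹ * z.2) ⁻¹' U ∈ 𝓝 ((1 : G), (1 : G)) := hcont hU
  rw [nhds_prod_eq, mem_prod_iff] at hpre
  obtain ⟨U₁, hU₁, U₂, hU₂, hsub⟩ := hpre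
  obtain ⟨V₁, hV₁U, hV₁o, h1V₁⟩ := mem_nhds_iff.mp hU₁
  obtain ⟨V₂, hV₂U, hV₂o, h1V₂⟩ := mem_nhds_iff.mp hU₂
  refine ⟨V₁ ∩ V₂, hV₁o.inter hV₂o, ⟨h1V₁, h1V₂⟩, fun v hv w hw => ?_⟩
  exact hsub (Set.mk_mem_prod (hV₁U hv.1) (hV₂U hw.2))

end St18

namespace St18

variable {G : Type*} [Group G] [TopologicalSpace G] [IsTopologicalGroup G]

/-- From a set of pairs meeting each spoke finitely, produce an open set around the
apex image avoiding the corresponding points. -/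
theorem fan_avoid {S : Set G} (e : SeqFan ≃ₜ ↥S) (P : Set (ℕ × ℕ))
    (hP : ∀ n, {m | (n, m) ∈ P}.Finite) :
    ∃ V : Set G, IsOpen V ∧ (e SeqFan.apex : G) ∈ V ∧
      ∀ q ∈ P, (e (SeqFan.pt q.1 q.2) : G) ∉ V := by
  classical
  set W : Set SeqFan := ((fun q : ℕ × ℕ => SeqFan.pt q.1 q.2) '' P)ᶜ with hW
  have hWap : SeqFan.apex ∈ W := by
    intro hmem
    obtain ⟨q, _, hq⟩ := hmem
    exact SeqFan.pt_ne_apex q.1 q.2 hq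
  have hWo : IsOpen W := by
    rw [seqFan_isOpen_iff]
    intro _ n
    refine (hP n).subset ?_
    intro m hm
    simp only [Set.mem_setOf_eq, hW, Set.not_notMem, Set.mem_compl_iff] at hm
    obtain ⟨q, hqP, hq⟩ := hm
    have : q = (n, m) := SeqFan.pt_injective hq
    rwa [this] at hqP
  have hEW : IsOpen (e '' W) := (Homeomorph.isOpen_image e).mpr hWo
  obtain ⟨V, hVo, hVpre⟩ := isOpen_induced_iff.mp hEW
  refine ⟨V, hVo, ?_, ?_⟩
  · have : e SeqFan.apex ∈ e '' W := Set.mem_image_of_mem e hWap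
    rw [← hVpre] at this
    exact this
  · rintro q hq hv
    have : e (SeqFan.pt q.1 q.2) ∈ Subtype.val ⁻¹' V := hv
    rw [hVpre] at this
    obtain ⟨y, hyW, hy⟩ := this
    have : y = SeqFan.pt q.1 q.2 := e.injective hy
    rw [this] at hyW
    exact hyW ⟨q, hq, rfl⟩

theorem no_fan_of_fus (G : Type*) [Group G] [TopologicalSpace G] [IsTopologicalGroup G]
    [T1Space G] [FrechetUrysohnSpace G] (S : Set G) (e : SeqFan ≃ₜ ↥S) : False := by
  classical
  haveI : T2Space G := IsTopologicalGroup.t2Space_iff_one_closed.mpr isClosed_singleton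
  set p : G := (e SeqFan.apex : G) with hp
  set σ : ℕ → ℕ → G := fun n m => (e (SeqFan.pt n m) : G) with hσ
  have hσinj : ∀ {n m n' m'}, σ n m = σ n' m' → n = n' ∧ m = m' := by
    intro n m n' m' h
    have h2 : e (SeqFan.pt n m) = e (SeqFan.pt n' m') := Subtype.coe_injective h
    have h3 : ((n, m) : ℕ × ℕ) = (n', m') := SeqFan.pt_injective (e.injective h2)
    exact ⟨congrArg Prod.fst h3, congrArg Prod.snd h3⟩
  have hσp : ∀ n m, σ n m ≠ p := by
    intro n m h
    exact SeqFan.pt_ne_apex n m (e.injective (Subtype.coe_injective h))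
  have hσt : ∀ n, Tendsto (σ n) atTop (𝓝 p) := by
    intro n
    have h1 : Tendsto (fun m => e (SeqFan.pt n m)) atTop (𝓝 (e SeqFan.apex)) :=
      (e.continuous.tendsto SeqFan.apex).comp (seqFan_tendsto_spoke n)
    exact (continuous_subtype_val.tendsto _).comp h1
  set τ : ℕ → ℕ → G := fun n m => p⁻¹ * σ n m with hτ
  have hτt : ∀ n, Tendsto (τ n) atTop (𝓝 1) := by
    intro n
    have := (hσt n).const_mul p⁻¹
    simpa using this
  have hτinj : ∀ n, Function.Injective (τ n) := by
    intro n a b hab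
    exact (hσinj (mul_left_cancel hab)).2
  set t : ℕ → G := fun n => τ 0 n with ht
  have htt : Tendsto t atTop (𝓝 1) := hτt 0
  have ht1 : ∀ n, t n ≠ 1 := by
    intro n h
    exact hσp 0 n (inv_mul_eq_one.mp h).symm
  set A : Set G := {x | x ≠ 1 ∧ ∃ q : ℕ × ℕ, x = t q.1 * τ q.1 q.2} with hA
  -- 1 is in the closure of A
  have hclo : (1 : G) ∈ closure A := by
    rw [mem_closure_iff_nhds]
    intro U hU
    obtain ⟨V, hVo, hV1, hVV⟩ := nhds_one_split hU
    obtain ⟨n, hn⟩ := (eventually_atTop.mp (mem_map.mp (htt (hVo.mem_nhds hV1)))).imp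
      (fun N hN => hN N le_rfl)
    obtain ⟨M, hM⟩ := eventually_atTop.mp (mem_map.mp ((hτt n) (hVo.mem_nhds hV1)))
    -- pick two values of m, at least one gives a point ≠ 1
    have h2 : t n * τ n M ≠ 1 ∨ t n * τ n (M + 1) ≠ 1 := by
      by_contra hc
      push_neg at hc
      have := hc.1.trans hc.2.symm
      exact Nat.succ_ne_self M ((hτinj n (mul_left_cancel this)).symm)
    rcases h2 with h2 | h2
    · exact ⟨t n * τ n M, hVV _ hn _ (hM M le_rfl), h2, ⟨(n, M), rfl⟩⟩
    · exact ⟨t n * τ n (M + 1), hVV _ hn _ (hM (M + 1) (by omega)), h2, ⟨(n, M + 1), rfl⟩⟩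
  obtain ⟨a, haA, halim⟩ := mem_closure_iff_seq_limit.mp hclo
  have hnot1 : (1 : G) ∉ range a := by
    rintro ⟨n, hn⟩
    exact (haA n).1 hn
  have hrinf : (range a).Infinite := by
    intro hfin
    exact hnot1 (mem_range_of_tendsto_of_finite halim hfin)
  have hcsa : CS (range a) 1 := cs_of_tendsto halim
  -- choice of representation
  set Q : G → ℕ × ℕ := fun x => if hx : x ∈ A then Classical.choose hx.2 else (0, 0) with hQ
  have hQspec : ∀ x ∈ A, x = t (Q x).1 * τ (Q x).1 (Q x).2 := by
    intro x hx
    simp only [hQ, dif_pos hx]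
    exact Classical.choose_spec hx.2
  set N : Set ℕ := (fun x => (Q x).1) '' range a with hN
  rcases N.finite_or_infinite with hNfin | hNinf
  · -- finitely many spokes: some fiber infinite, converges to two points
    have hcover : range a ⊆ ⋃ n ∈ N, {x ∈ range a | (Q x).1 = n} := by
      intro x hx
      exact Set.mem_biUnion (Set.mem_image_of_mem _ hx) ⟨hx, rfl⟩
    have : ∃ n ∈ N, {x ∈ range a | (Q x).1 = n}.Infinite := by
      by_contra hc
      push_neg at hc
      exact hrinf ((hNfin.biUnion hc).subset hcover)
    obtain ⟨n, _, hXinf⟩ := this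
    set X := {x ∈ range a | (Q x).1 = n} with hX
    set Z := (fun x => (t n)⁻¹ * x) '' X with hZ
    have hZinf : Z.Infinite := hXinf.image ((mul_right_injective _).injOn)
    have hZcs : CS Z ((t n)⁻¹) := by
      have h0 : CS X 1 := hcsa.mono (fun x hx => hx.1)
      have := cs_mul_left (t n)⁻¹ h0
      rw [mul_one] at this
      exact this
    have hZsub : Z ⊆ range (τ n) := by
      rintro z ⟨x, ⟨⟨j, rfl⟩, hQ1⟩, rfl⟩
      have hspec := hQspec (a j) (haA j)
      rw [hQ1] at hspec
      show (t n)⁻¹ * a j ∈ range (τ n)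
      have heq : (t n)⁻¹ * a j = τ n (Q (a j)).2 := by
        conv_lhs => rw [hspec]
        rw [inv_mul_cancel_left]
      exact ⟨(Q (a j)).2, heq.symm⟩
    have hZcs1 : CS Z 1 := (cs_of_tendsto (hτt n)).mono hZsub
    have : (t n)⁻¹ = 1 := cs_unique hZinf hZcs hZcs1
    exact ht1 n (by simpa using congrArg (fun y => y⁻¹) this)
  · -- infinitely many spokes: contradiction with the fan topology
    set xsel : ℕ → G := fun n => if hn : n ∈ N then Classical.choose hn else 1 with hxsel
    have hxspec : ∀ n ∈ N, xsel n ∈ range a ∧ (Q (xsel n)).1 = n := by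
      intro n hn
      simp only [hxsel, dif_pos hn]
      obtain ⟨h1, h2⟩ := Classical.choose_spec hn
      exact ⟨h1, h2⟩
    set P : Set (ℕ × ℕ) := (fun n => Q (xsel n)) '' N with hP
    have hPfin : ∀ n, {m | (n, m) ∈ P}.Finite := by
      intro n
      refine (Set.finite_singleton (Q (xsel n)).2).subset ?_
      intro m hm
      obtain ⟨n', hn', hq⟩ := hm
      have hq' : Q (xsel n') = (n, m) := hq
      have h1 : (Q (xsel n')).1 = n' := (hxspec n' hn').2
      have hn'n : n' = n := by rw [← h1, hq']
      subst hn'n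
      simp [hq']
    obtain ⟨V, hVo, hpV, hVav⟩ := fan_avoid e P hPfin
    set V' : Set G := (fun y => p * y) ⁻¹' V with hV'
    have hV'o : IsOpen V' := hVo.preimage (continuous_const.mul continuous_id)
    have h1V' : (1 : G) ∈ V' := by
      simp only [hV', Set.mem_preimage, mul_one]
      exact hpV
    have hτav : ∀ q ∈ P, τ q.1 q.2 ∉ V' := by
      intro q hq hmem
      refine hVav q hq ?_
      have h2 : p * (p⁻¹ * σ q.1 q.2) ∈ V := hmem
      rw [mul_inv_cancel_left] at h2
      exact h2
    obtain ⟨U₀, hU₀o, hU₀1, hU₀⟩ := nhds_one_split_inv (hV'o.mem_nhds h1V')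
    obtain ⟨N₁, hN₁⟩ := eventually_atTop.mp (mem_map.mp (htt (hU₀o.mem_nhds hU₀1)))
    have hbadfin : {n ∈ N | xsel n ∉ U₀}.Finite := by
      refine ((hcsa U₀ (hU₀o.mem_nhds hU₀1)).image (fun x => (Q x).1)).subset ?_
      rintro n ⟨hn, hnot⟩
      exact ⟨xsel n, ⟨(hxspec n hn).1, hnot⟩, (hxspec n hn).2⟩
    have : (N \ ({n ∈ N | xsel n ∉ U₀} ∪ Set.Iio N₁)).Infinite :=
      hNinf.diff (hbadfin.union (Set.finite_Iio N₁))
    obtain ⟨n, hnN, hn2⟩ := this.nonempty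
    have hxU : xsel n ∈ U₀ := by
      by_contra hc
      exact hn2 (Set.mem_union_left _ ⟨hnN, hc⟩)
    have htU : t n ∈ U₀ := by
      refine hN₁ n (not_lt.mp fun hc => ?_)
      exact hn2 (Set.mem_union_right _ hc)
    have key : (t n)⁻¹ * xsel n ∈ V' := hU₀ _ htU _ hxU
    have hxA : xsel n ∈ A := by
      obtain ⟨j, hj⟩ := (hxspec n hnN).1
      exact hj ▸ haA j
    have hspec := hQspec (xsel n) hxA
    have hqP : Q (xsel n) ∈ P := ⟨n, hnN, rfl⟩
    have h1 : (Q (xsel n)).1 = n := (hxspec n hnN).2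
    refine hτav (Q (xsel n)) hqP ?_
    rw [h1]
    have : (t n)⁻¹ * xsel n = τ n (Q (xsel n)).2 := by
      conv_lhs => rw [hspec, h1]
      rw [inv_mul_cancel_left]
    rwa [this] at key

end St18
namespace St18
open scoped Classical

theorem infinite_piece {α β : Type*} {I : Set β} (hI : I.Finite) {g : β → Set α} {s : Set α}
    (hs : s.Infinite) (hsub : s ⊆ ⋃ i ∈ I, g i) : ∃ i ∈ I, (s ∩ g i).Infinite := by
  by_contra h
  push_neg at h
  refine hs ((hI.biUnion h).subset ?_)
  intro x hx
  have := hsub hx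
  simp only [Set.mem_iUnion] at this
  obtain ⟨i, hi, hxi⟩ := this
  exact Set.mem_biUnion hi ⟨hx, hxi⟩

variable {G : Type*}

/-- The candidate spoke before pruning. -/
def fanX (E WW : ℕ → Set G) (D : ℕ → Set G) (n : ℕ) : Set G :=
  E n \ (WW n ∪ ⋃ j ∈ Finset.range n, D j)

/-- Cumulative recursive construction of the pruned spokes. -/
noncomputable def fanH (E WW : ℕ → Set G) : ℕ → ℕ → Set G
  | 0, _ => ∅
  | (n+1), k =>
    if k = n then
      (if (fanX E WW (fanH E WW n) n).Infinite then fanX E WW (fanH E WW n) n else ∅)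
    else fanH E WW n k

/-- The pruned spokes. -/
noncomputable def fanD (E WW : ℕ → Set G) (n : ℕ) : Set G := fanH E WW (n + 1) n

theorem fanH_stab (E WW : ℕ → Set G) : ∀ m n, n < m → fanH E WW m n = fanD E WW n := by
  intro m
  induction m with
  | zero => intro n hn; omega
  | succ m ih =>
    intro n hn
    by_cases hnm : n = m
    · subst hnm; rfl
    · have h1 : fanH E WW (m + 1) n = fanH E WW m n := by
        show (if n = m then _ else fanH E WW m n) = fanH E WW m n
        rw [if_neg hnm]
      rw [h1]
      exact ih n (by omega)

theorem fanD_eq (E WW : ℕ → Set G) (n : ℕ) :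
    fanD E WW n = if (fanX E WW (fanD E WW) n).Infinite then fanX E WW (fanD E WW) n else ∅ := by
  have hX : fanX E WW (fanH E WW n) n = fanX E WW (fanD E WW) n := by
    unfold fanX
    congr 1
    congr 1
    refine Set.iUnion₂_congr fun j hj => ?_
    exact fanH_stab E WW n j (Finset.mem_range.mp hj)
  show (if n = n then (if (fanX E WW (fanH E WW n) n).Infinite then fanX E WW (fanH E WW n) n else ∅) else fanH E WW n n) = _
  rw [if_pos rfl, hX]

end St18

namespace St18

theorem fan_of_not_fus (G : Type*) [Group G] [TopologicalSpace G] [IsTopologicalGroup G]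
    [T1Space G] [Countable G] [SequentialSpace G] (hno : ¬ FrechetUrysohnSpace G) :
    ∃ S : Set G, IsClosed S ∧ Nonempty (SeqFan ≃ₜ ↥S) := by
  classical
  haveI : T2Space G := IsTopologicalGroup.t2Space_iff_one_closed.mpr isClosed_singleton
  -- Step 1: a set whose sequential closure is not sequentially closed
  have hex : ∃ C : Set G, ¬ IsSeqClosed (seqClosure C) := by
    by_contra h
    push_neg at h
    exact hno ⟨fun s => closure_minimal subset_seqClosure (h s).isClosed⟩
  obtain ⟨C0, hC0⟩ := hex
  unfold IsSeqClosed at hC0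
  push_neg at hC0
  obtain ⟨u, q, huC, hulim, hqn⟩ := hC0
  -- Step 2: translate to the identity
  set C : Set G := (fun y => q⁻¹ * y) '' C0 with hCdef
  have hC1 : (1 : G) ∉ seqClosure C := by
    rintro ⟨v, hv, hvlim⟩
    refine hqn ⟨fun n => q * v n, fun n => ?_, ?_⟩
    · obtain ⟨c, hc, hcv⟩ := hv n
      show q * v n ∈ C0
      rw [← hcv, mul_inv_cancel_left]
      exact hc
    · have := hvlim.const_mul q
      simpa using this
  have hbSC : ∀ n, q⁻¹ * u n ∈ seqClosure C := by
    intro n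
    obtain ⟨w, hw, hwlim⟩ := huC n
    exact ⟨fun k => q⁻¹ * w k, fun k => ⟨w k, hw k, rfl⟩, by simpa using hwlim.const_mul q⁻¹⟩
  have hb1 : ∀ n, q⁻¹ * u n ≠ 1 := by
    intro n h
    exact hqn ((inv_mul_eq_one.mp h) ▸ huC n)
  have hblim : Tendsto (fun n => q⁻¹ * u n) atTop (𝓝 1) := by
    have := hulim.const_mul q⁻¹
    simpa using this
  set B : Set G := range (fun n => q⁻¹ * u n) with hBdef
  have hBcs : CS B 1 := cs_of_tendsto hblim
  have hBinf : B.Infinite := by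
    intro hfin
    obtain ⟨n, hn⟩ := mem_range_of_tendsto_of_finite hblim hfin
    exact hb1 n hn
  obtain ⟨b', hb'inj, hb'range, hb'lim⟩ := cs_enum (Set.to_countable B) hBinf hBcs
  have hb'B : ∀ n, b' n ∈ B := fun n => hb'range ▸ mem_range_self n
  have hb'SC : ∀ n, b' n ∈ seqClosure C := by
    intro n
    obtain ⟨m, hm⟩ := hb'B n
    exact hm ▸ hbSC m
  have hb'1 : ∀ n, b' n ≠ 1 := by
    intro n
    obtain ⟨m, hm⟩ := hb'B n
    exact hm ▸ hb1 m
  have hJfin : {n | b' n ∈ C}.Finite := by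
    by_contra hJinf
    have hJinf' : Set.Infinite {n | b' n ∈ C} := hJinf
    have h1 : (b' '' {n | b' n ∈ C}).Infinite := hJinf'.image hb'inj.injOn
    have h2 : CS (b' '' {n | b' n ∈ C}) 1 := by
      refine hBcs.mono ?_
      rintro x ⟨n, _, rfl⟩
      exact hb'B n
    obtain ⟨w, _, hwrange, hwlim⟩ := cs_enum (Set.to_countable _) h1 h2
    refine hC1 ⟨w, fun n => ?_, hwlim⟩
    have hmem : w n ∈ b' '' {n | b' n ∈ C} := hwrange ▸ mem_range_self n
    obtain ⟨m, hm, hmw⟩ := hmem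
    exact hmw ▸ hm
  obtain ⟨N₀, hN₀⟩ := hJfin.bddAbove
  set bb : ℕ → G := fun n => b' (n + (N₀ + 1)) with hbbdef
  have hbbinj : Function.Injective bb := by
    intro a b hab
    have := hb'inj hab
    omega
  have hbblim : Tendsto bb atTop (𝓝 1) := hb'lim.comp (tendsto_add_atTop_nat _)
  have hbbC : ∀ n, bb n ∉ C := by
    intro n hmem
    have : n + (N₀ + 1) ≤ N₀ := hN₀ hmem
    omega
  have hbb1 : ∀ n, bb n ≠ 1 := fun n => hb'1 _
  have hbbSC : ∀ n, bb n ∈ seqClosure C := fun n => hb'SC _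
  have hbbB : range bb ⊆ B := by
    rintro x ⟨n, rfl⟩
    exact hb'B _
  have hbbcs : CS (range bb) 1 := hBcs.mono hbbB
  -- Step 3: the spokes
  have hspoke : ∀ n, ∃ E : Set G, E.Infinite ∧ CS E 1 ∧ (1 : G) ∉ E ∧ ∀ x ∈ E, bb n * x ∈ C := by
    intro n
    obtain ⟨s, hsC, hslim⟩ := hbbSC n
    have hsrinf : (range s).Infinite := by
      intro hfin
      obtain ⟨m, hm⟩ := mem_range_of_tendsto_of_finite hslim hfin
      exact hbbC n (hm ▸ hsC m)
    refine ⟨(fun y => (bb n)⁻¹ * y) '' range s,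
      hsrinf.image (mul_right_injective _).injOn, ?_, ?_, ?_⟩
    · have := cs_mul_left (bb n)⁻¹ (cs_of_tendsto hslim)
      simpa using this
    · rintro ⟨y, hy, hy1⟩
      have hyb : bb n = y := inv_mul_eq_one.mp hy1
      obtain ⟨m, hm⟩ := hy
      exact hbbC n (by rw [hyb, ← hm]; exact hsC m)
    · rintro x ⟨y, hy, rfl⟩
      rw [mul_inv_cancel_left]
      obtain ⟨m, hm⟩ := hy
      exact hm ▸ hsC m
  choose E hEinf hEcs hE1 hEC using hspoke
  -- Step 4: separating open sets
  obtain ⟨z, hzsurj⟩ := exists_surjective_nat G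
  have hsep : ∀ k, ∃ WV : Set G × Set G, IsOpen WV.1 ∧ IsOpen WV.2 ∧ (1 : G) ∈ WV.2 ∧
      Disjoint WV.1 WV.2 ∧ (z k ≠ 1 → z k ∈ WV.1) := by
    intro k
    by_cases hzk : z k = 1
    · exact ⟨(∅, Set.univ), isOpen_empty, isOpen_univ, trivial, disjoint_bot_left,
        fun h => absurd hzk h⟩
    · obtain ⟨U, V, hU, hV, hzU, h1V, hUV⟩ := t2_separation hzk
      exact ⟨(U, V), hU, hV, h1V, hUV, fun _ => hzU⟩
  choose WV hWo hVo hV1 hWVd hzW using hsep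
  set W : ℕ → Set G := fun k => (WV k).1 with hWdef
  have hWfin : ∀ (D : Set G), CS D 1 → ∀ k, (D ∩ W k).Finite := by
    intro D hD k
    refine (hD (WV k).2 ((hVo k).mem_nhds (hV1 k))).subset ?_
    rintro x ⟨hxD, hxW⟩
    exact ⟨hxD, fun hxV => Set.disjoint_left.mp (hWVd k) hxW hxV⟩
  -- Step 5: the recursive pruning
  set WW : ℕ → Set G := fun n => ⋃ k ∈ Finset.range (n + 1), W k with hWWdef
  set D : ℕ → Set G := fanD E WW with hDdef
  set X : ℕ → Set G := fanX E WW D with hXdefn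
  have hDeq : ∀ n, D n = if (X n).Infinite then X n else ∅ := fun n => fanD_eq E WW n
  have hXdef : ∀ n, X n = E n \ (WW n ∪ ⋃ j ∈ Finset.range n, D j) := fun n => rfl
  have hDsub : ∀ n, D n ⊆ X n := by
    intro n
    rw [hDeq n]
    split_ifs
    · exact subset_rfl
    · exact Set.empty_subset _
  have hDsubE : ∀ n, D n ⊆ E n := by
    intro n
    refine (hDsub n).trans ?_
    rw [hXdef n]
    exact Set.diff_subset
  have hDW : ∀ n k, k ≤ n → ∀ x, x ∈ D n → x ∉ W k := by
    intro n k hk x hx hxW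
    have := hDsub n hx
    rw [hXdef n] at this
    refine this.2 (Set.mem_union_left _ ?_)
    exact Set.mem_biUnion (Finset.mem_range.mpr (by omega)) hxW
  have hDD : ∀ j n, j < n → ∀ x, x ∈ D n → x ∉ D j := by
    intro j n hj x hx hxj
    have := hDsub n hx
    rw [hXdef n] at this
    exact this.2 (Set.mem_union_right _ (Set.mem_biUnion (Finset.mem_range.mpr hj) hxj))
  have hDcs : ∀ n, CS (D n) 1 := fun n => (hEcs n).mono (hDsubE n)
  have hD1 : ∀ n, (1 : G) ∉ D n := fun n h => hE1 n (hDsubE n h)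
  have hDC : ∀ n, ∀ x ∈ D n, bb n * x ∈ C := fun n x h => hEC n x (hDsubE n h)
  set Acc : Set ℕ := {n | (X n).Infinite} with hAccdef
  have hDim : ∀ n ∈ Acc, D n = X n := by
    intro n hn
    rw [hDeq n]
    exact if_pos hn
  have hDinf : ∀ n ∈ Acc, (D n).Infinite := by
    intro n hn
    rw [hDim n hn]
    exact hn
  have hDemp : ∀ n, n ∉ Acc → D n = ∅ := by
    intro n hn
    rw [hDeq n]
    exact if_neg hn
  -- Step 6: infinitely many spokes survive
  have hAccInf : Acc.Infinite := by
    by_contra hAF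
    rw [Set.not_infinite] at hAF
    obtain ⟨gn, hgn⟩ := exists_injective_nat G
    have hstep : ∀ n, n ∉ Acc → ∃ k, k ∈ Acc ∧ (E n ∩ D k).Infinite := by
      intro n hn
      have hXfin : (X n).Finite := Set.not_infinite.mp hn
      have hWWfin : (E n ∩ WW n).Finite := by
        refine (((Finset.range (n + 1)).finite_toSet.biUnion
          (fun k _ => hWfin (E n) (hEcs n) k)).subset ?_)
        rintro x ⟨hxE, hxW⟩
        simp only [hWWdef, Set.mem_iUnion] at hxW
        obtain ⟨k, hk, hxk⟩ := hxW
        exact Set.mem_biUnion hk ⟨hxE, hxk⟩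
      have hEsplit : E n ⊆ X n ∪ (E n ∩ WW n) ∪ (E n ∩ ⋃ j ∈ Finset.range n, D j) := by
        intro x hx
        rw [hXdef n]
        by_cases h1 : x ∈ WW n
        · exact Or.inl (Or.inr ⟨hx, h1⟩)
        · by_cases h2 : x ∈ ⋃ j ∈ Finset.range n, D j
          · exact Or.inr ⟨hx, h2⟩
          · exact Or.inl (Or.inl ⟨hx, fun hc => hc.elim h1 h2⟩)
      have hinf : (E n ∩ ⋃ j ∈ Finset.range n, D j).Infinite := by
        by_contra hfin
        rw [Set.not_infinite] at hfin
        exact (hEinf n) (((hXfin.union hWWfin).union hfin).subset hEsplit)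
      obtain ⟨j, hj, hjinf⟩ := infinite_piece (Finset.range n).finite_toSet hinf
        (fun x hx => hx.2)
      have hjAcc : j ∈ Acc := by
        by_contra hjn
        rw [hDemp j hjn] at hjinf
        simp at hjinf
      exact ⟨j, hjAcc, hjinf.mono fun x hx => ⟨hx.1.1, hx.2⟩⟩
    choose! kk hkkAcc hkkInf using hstep
    have hAccC : (Accᶜ : Set ℕ).Infinite := hAF.infinite_compl
    have hpig : ∃ k ∈ Acc, ((Accᶜ : Set ℕ) ∩ {n | kk n = k}).Infinite := by
      refine infinite_piece hAF hAccC ?_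
      intro n hn
      exact Set.mem_biUnion (hkkAcc n hn) rfl
    obtain ⟨ks, hksAcc, hM'inf⟩ := hpig
    set M' : Set ℕ := (Accᶜ : Set ℕ) ∩ {n | kk n = ks} with hM'def
    have hM'spec : ∀ n ∈ M', (E n ∩ D ks).Infinite := by
      intro n hn
      have := hkkInf n hn.1
      rwa [hn.2] at this
    have hxsel : ∀ n ∈ M', ∃ x, x ∈ E n ∧ x ∈ D ks ∧ n < gn x := by
      intro n hn
      have hinf2 : ((E n ∩ D ks) \ gn ⁻¹' (Set.Iic n)).Infinite :=
        (hM'spec n hn).diff ((Set.finite_Iic n).preimage hgn.injOn)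
      obtain ⟨x, hx⟩ := hinf2.nonempty
      refine ⟨x, hx.1.1, hx.1.2, ?_⟩
      have := hx.2
      simp only [Set.mem_preimage, Set.mem_Iic, not_le] at this
      exact this
    choose! xx hxxE hxxD hxxg using hxsel
    set Γ : Set G := (fun n => bb n * xx n) '' M' with hΓdef
    have hΓC : Γ ⊆ C := by
      rintro y ⟨n, hn, rfl⟩
      exact hEC n (xx n) (hxxE n hn)
    rcases Γ.finite_or_infinite with hΓfin | hΓinf
    · have hsub : M' ⊆ ⋃ v ∈ Γ, {n | bb n * xx n = v} := by
        intro n hn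
        exact Set.mem_biUnion ⟨n, hn, rfl⟩ rfl
      obtain ⟨v, hvΓ, hvinf⟩ := infinite_piece hΓfin hM'inf hsub
      set M'' : Set ℕ := M' ∩ {n | bb n * xx n = v} with hM''def
      have hBBinf : (bb '' M'').Infinite := hvinf.image hbbinj.injOn
      have hBBcs : CS (bb '' M'') 1 := by
        refine hbbcs.mono ?_
        rintro y ⟨n, _, rfl⟩
        exact mem_range_self n
      have hXeq : xx '' M'' = (fun y => y⁻¹ * v) '' (bb '' M'') := by
        rw [Set.image_image]
        refine Set.image_congr fun n hn => ?_
        have hv : bb n * xx n = v := hn.2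
        rw [← hv, inv_mul_cancel_left]
      have hXcs1 : CS (xx '' M'') 1 := by
        refine (hDcs ks).mono ?_
        rintro y ⟨n, hn, rfl⟩
        exact hxxD n hn.1
      have hXcsv : CS (xx '' M'') v := by
        rw [hXeq]
        have := cs_inv_mul_right v hBBcs
        simpa using this
      have hXinf' : (xx '' M'').Infinite := by
        rw [hXeq]
        refine hBBinf.image ?_
        have : Function.Injective (fun y : G => y⁻¹ * v) := by
          intro a b hab
          simpa using mul_right_cancel hab
        exact this.injOn
      have hv1 : v = 1 := cs_unique hXinf' hXcsv hXcs1
      exact hC1 ⟨fun _ => 1, fun _ => hv1 ▸ hΓC hvΓ, tendsto_const_nhds⟩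
    · have hΓcs : CS Γ 1 := by
        intro U hU
        obtain ⟨V, hVo2, hV1m, hVV⟩ := nhds_one_split hU
        obtain ⟨Nb, hNb⟩ := eventually_atTop.mp (mem_map.mp (hbblim (hVo2.mem_nhds hV1m)))
        have hbad : {n | n ∈ M' ∧ xx n ∉ V}.Finite := by
          refine (Set.Finite.biUnion ((hDcs ks) V (hVo2.mem_nhds hV1m))
            (fun w _ => Set.finite_Iio (gn w))).subset ?_
          rintro n ⟨hn, hnV⟩
          exact Set.mem_biUnion ⟨hxxD n hn, hnV⟩ (hxxg n hn)
        refine (((hbad.union (Set.finite_Iio Nb)).inter_of_left M').image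
          (fun n => bb n * xx n)).subset ?_
        rintro y ⟨⟨n, hn, rfl⟩, hyU⟩
        refine ⟨n, ⟨?_, hn⟩, rfl⟩
        by_contra hnmem
        have h1 : xx n ∈ V := by
          by_contra hc
          exact hnmem (Set.mem_union_left _ ⟨hn, hc⟩)
        have h2 : bb n ∈ V := by
          refine hNb n (not_lt.mp fun hc => ?_)
          exact hnmem (Set.mem_union_right _ hc)
        exact hyU (hVV _ h2 _ h1)
      obtain ⟨w, _, hwrange, hwlim⟩ := cs_enum (Set.to_countable Γ) hΓinf hΓcs
      exact hC1 ⟨w, fun n => hΓC (hwrange ▸ mem_range_self n), hwlim⟩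
  -- Step 7: relabel the surviving spokes
  set nn : ℕ → ℕ := Nat.nth (· ∈ Acc) with hnndef
  have hAccInf' : {n | n ∈ Acc}.Infinite := hAccInf
  have hnnmem : ∀ i, nn i ∈ Acc := fun i => Nat.nth_mem_of_infinite hAccInf' i
  have hnnmono : StrictMono nn := Nat.nth_strictMono hAccInf'
  have hnnge : ∀ i, i ≤ nn i := fun i => hnnmono.le_apply
  set D' : ℕ → Set G := fun i => D (nn i) with hD'def
  have hD'inf : ∀ i, (D' i).Infinite := fun i => hDinf _ (hnnmem i)
  have hD'cs : ∀ i, CS (D' i) 1 := fun i => hDcs _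
  have hD'1 : ∀ i, (1 : G) ∉ D' i := fun i => hD1 _
  have hD'disj : ∀ i j, i ≠ j → ∀ x, x ∈ D' i → x ∉ D' j := by
    intro i j hij x hxi hxj
    rcases lt_or_gt_of_ne hij with h | h
    · exact hDD (nn i) (nn j) (hnnmono h) x hxj hxi
    · exact hDD (nn j) (nn i) (hnnmono h) x hxi hxj
  have hD'W : ∀ i k, k ≤ nn i → ∀ x, x ∈ D' i → x ∉ W k := fun i k hk => hDW (nn i) k hk
  have hD'C : ∀ i, ∀ x ∈ D' i, bb (nn i) * x ∈ C := fun i => hDC (nn i)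
  -- Step 8: key selection lemma: no almost-disjoint selection converges
  have KSL : ∀ T : Set G, T ⊆ (⋃ i, D' i) → T.Infinite → (∀ i, (T ∩ D' i).Finite) →
      ∀ w, ¬ CS T w := by
    intro T hTsub hTinf hTfin w hTcs
    by_cases hw : w = 1
    · subst hw
      have hidx : ∀ x, x ∈ T → ∃ i, x ∈ D' i := by
        intro x hx
        simpa using hTsub hx
      choose! ii hii using hidx
      set c : G → G := fun x => bb (nn (ii x)) * x with hcdef
      set Γ : Set G := c '' T with hΓdef2
      have hΓC : Γ ⊆ C := by
        rintro y ⟨x, hx, rfl⟩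
        exact hD'C (ii x) x (hii x hx)
      rcases Γ.finite_or_infinite with hf | hinf
      · have hsub2 : T ⊆ ⋃ v ∈ Γ, {x | c x = v} := fun x hx =>
          Set.mem_biUnion ⟨x, hx, rfl⟩ rfl
        obtain ⟨v, hvΓ, hvinf⟩ := infinite_piece hf hTinf hsub2
        set Tv : Set G := T ∩ {x | c x = v} with hTvdef
        have hBB : ∀ x ∈ Tv, v * x⁻¹ = bb (nn (ii x)) := by
          intro x hx
          have hvx : bb (nn (ii x)) * x = v := hx.2
          rw [← hvx, mul_inv_cancel_right]
        have hBBsub : (fun x => v * x⁻¹) '' Tv ⊆ range bb := by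
          rintro y ⟨x, hx, rfl⟩
          show v * x⁻¹ ∈ range bb
          rw [hBB x hx]
          exact mem_range_self _
        have hinvinj : Function.Injective (fun x : G => v * x⁻¹) := by
          intro a b hab
          simpa using hab
        have hBBinf : ((fun x => v * x⁻¹) '' Tv).Infinite := hvinf.image hinvinj.injOn
        have hBBcs1 : CS ((fun x => v * x⁻¹) '' Tv) 1 := hbbcs.mono hBBsub
        have hBBcsv : CS ((fun x => v * x⁻¹) '' Tv) v := by
          have hTv1 : CS Tv 1 := hTcs.mono Set.inter_subset_left
          have := cs_mul_inv_right v hTv1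
          simpa using this
        have hv1 : v = 1 := cs_unique hBBinf hBBcsv hBBcs1
        exact hC1 ⟨fun _ => 1, fun _ => hv1 ▸ hΓC hvΓ, tendsto_const_nhds⟩
      · have hΓcs : CS Γ 1 := by
          intro U hU
          obtain ⟨V, hVo2, hV1m, hVV⟩ := nhds_one_split hU
          obtain ⟨Nb, hNb⟩ := eventually_atTop.mp (mem_map.mp (hbblim (hVo2.mem_nhds hV1m)))
          have hbad1 : {x | x ∈ T ∧ bb (nn (ii x)) ∉ V}.Finite := by
            refine ((Set.finite_Iio Nb).biUnion (fun i _ => hTfin i)).subset ?_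
            rintro x ⟨hxT, hxV⟩
            have hlt : nn (ii x) < Nb := by
              by_contra hge
              exact hxV (hNb _ (not_lt.mp hge))
            exact Set.mem_biUnion (lt_of_le_of_lt (hnnge (ii x)) hlt) ⟨hxT, hii x hxT⟩
          have hbad2 : (T \ V).Finite := hTcs V (hVo2.mem_nhds hV1m)
          refine ((hbad1.union hbad2).image c).subset ?_
          rintro y ⟨⟨x, hx, rfl⟩, hyU⟩
          refine Set.mem_image_of_mem c ?_
          by_contra hxmem
          have h1 : bb (nn (ii x)) ∈ V := by
            by_contra hc
            exact hxmem (Set.mem_union_left _ ⟨hx, hc⟩)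
          have h2 : x ∈ V := by
            by_contra hc
            exact hxmem (Set.mem_union_right _ ⟨hx, hc⟩)
          exact hyU (hVV _ h1 _ h2)
        obtain ⟨w', _, hwrange, hwlim⟩ := cs_enum (Set.to_countable Γ) hinf hΓcs
        exact hC1 ⟨w', fun n => hΓC (hwrange ▸ mem_range_self n), hwlim⟩
    · obtain ⟨k, hk⟩ := hzsurj w
      have hwW : w ∈ W k := by
        rw [← hk]
        exact hzW k (by rw [hk]; exact hw)
      have h1 : (T \ W k).Finite := hTcs (W k) ((hWo k).mem_nhds hwW)
      have h2 : (T ∩ W k).Finite := by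
        refine ((Set.finite_Iio k).biUnion (fun i _ => hTfin i)).subset ?_
        rintro x ⟨hxT, hxW⟩
        obtain ⟨i, hi⟩ : ∃ i, x ∈ D' i := by simpa using hTsub hxT
        have hik : nn i < k := by
          by_contra hge
          exact hD'W i k (not_lt.mp hge) x hi hxW
        exact Set.mem_biUnion (lt_of_le_of_lt (hnnge i) hik) ⟨hxT, hi⟩
      refine hTinf ((h1.union h2).subset fun x hx => ?_)
      by_cases h : x ∈ W k
      · exact Or.inr ⟨hx, h⟩
      · exact Or.inl ⟨hx, h⟩
  -- Step 9: the fan and its closedness properties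
  set F : Set G := {1} ∪ ⋃ i, D' i with hFdef
  have hlim1 : ∀ R : Set G, ∀ w : G, R ⊆ (⋃ i, D' i) → R.Infinite → CS R w → w = 1 := by
    intro R w hsub hinf hcs
    by_cases hsp : ∃ i, (R ∩ D' i).Infinite
    · obtain ⟨i, hi⟩ := hsp
      exact cs_unique hi (hcs.mono Set.inter_subset_left) ((hD'cs i).mono Set.inter_subset_right)
    · push_neg at hsp
      exact absurd hcs (KSL R hsub hinf hsp w)
  have hclosed1 : ∀ Z : Set G, Z ⊆ F → (1 : G) ∈ Z → IsClosed Z := by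
    intro Z hZF h1Z
    refine IsSeqClosed.isClosed ?_
    intro s w hs hslim
    rcases (range s).finite_or_infinite with hfin | hinf
    · obtain ⟨n, hn⟩ := mem_range_of_tendsto_of_finite hslim hfin
      exact hn ▸ hs n
    · have hcs := cs_of_tendsto hslim
      have hsub : range s \ {1} ⊆ ⋃ i, D' i := by
        rintro x ⟨hx, hx1⟩
        have hxZ : x ∈ Z := by
          obtain ⟨n, rfl⟩ := hx
          exact hs n
        rcases hZF hxZ with h | h
        · exact absurd h hx1
        · exact h
      have hw1 : w = 1 := hlim1 _ w hsub (hinf.diff (Set.finite_singleton 1))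
        (hcs.mono Set.diff_subset)
      exact hw1 ▸ h1Z
  have hclosedSel : ∀ T : Set G, T ⊆ (⋃ i, D' i) → (∀ i, (T ∩ D' i).Finite) → IsClosed T := by
    intro T hTsub hTfin
    refine IsSeqClosed.isClosed ?_
    intro s w hs hslim
    rcases (range s).finite_or_infinite with hfin | hinf
    · obtain ⟨n, hn⟩ := mem_range_of_tendsto_of_finite hslim hfin
      exact hn ▸ hs n
    · exfalso
      have hrs : range s ⊆ T := by
        rintro x ⟨n, rfl⟩
        exact hs n
      exact KSL (range s) (hrs.trans hTsub) hinf
        (fun i => (hTfin i).subset (Set.inter_subset_inter_left _ hrs)) w (cs_of_tendsto hslim)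
  -- Step 10: enumerate the spokes and build the homeomorphism
  have hd : ∀ i, ∃ dd : ℕ → G, Function.Injective dd ∧ range dd = D' i ∧
      Tendsto dd atTop (𝓝 1) := fun i => cs_enum (Set.to_countable _) (hD'inf i) (hD'cs i)
  choose d hdinj hdrange hdlim using hd
  have hdD : ∀ i m, d i m ∈ D' i := fun i m => (hdrange i) ▸ mem_range_self m
  set ψ : SeqFan → G := fun x => Option.rec (motive := fun _ => G) 1 (fun qq => d qq.1 qq.2) x
    with hψdef
  have hψapex : ψ SeqFan.apex = 1 := rfl
  have hψpt : ∀ n m, ψ (SeqFan.pt n m) = d n m := fun n m => rfl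
  have hψF : ∀ x, ψ x ∈ F := by
    intro x
    rcases SeqFan.cases x with rfl | ⟨n, m, rfl⟩
    · exact Set.mem_union_left _ rfl
    · exact Set.mem_union_right _ (Set.mem_iUnion.mpr ⟨n, hdD n m⟩)
  have hψinj : Function.Injective ψ := by
    intro x y hxy
    rcases SeqFan.cases x with rfl | ⟨n, m, rfl⟩ <;> rcases SeqFan.cases y with rfl | ⟨n', m', rfl⟩
    · rfl
    · exfalso
      have h1 : (1 : G) = d n' m' := hxy
      have h2 := hdD n' m'
      rw [← h1] at h2
      exact hD'1 n' h2
    · exfalso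
      have h1 : d n m = (1 : G) := hxy
      have h2 := hdD n m
      rw [h1] at h2
      exact hD'1 n h2
    · have hkey : d n m = d n' m' := hxy
      by_cases hnn' : n = n'
      · subst hnn'
        rw [hdinj n hkey]
      · exact absurd (hkey ▸ hdD n m) (hD'disj n' n (fun h => hnn' h.symm) _ (hdD n' m'))
  have hψsurj : ∀ y ∈ F, ∃ x, ψ x = y := by
    intro y hy
    rcases hy with hy | hy
    · exact ⟨SeqFan.apex, hy.symm⟩
    · obtain ⟨i, hi⟩ := Set.mem_iUnion.mp hy
      rw [← hdrange i] at hi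
      obtain ⟨m, hm⟩ := hi
      exact ⟨SeqFan.pt i m, hm⟩
  have hψcont : Continuous ψ := by
    rw [continuous_def]
    intro U hU
    rw [seqFan_isOpen_iff]
    intro h1 n
    have h1U : (1 : G) ∈ U := h1
    refine ((hD'cs n U (hU.mem_nhds h1U)).preimage (hdinj n).injOn).subset ?_
    intro m hm
    exact ⟨hdD n m, hm⟩
  have hclosedim : ∀ Z : Set SeqFan, IsClosed Z → IsClosed (ψ '' Z) := by
    intro Z hZ
    by_cases hap : SeqFan.apex ∈ Z
    · refine hclosed1 (ψ '' Z) ?_ ⟨SeqFan.apex, hap, rfl⟩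
      rintro y ⟨x, _, rfl⟩
      exact hψF x
    · refine hclosedSel (ψ '' Z) ?_ ?_
      · rintro y ⟨x, hx, rfl⟩
        rcases SeqFan.cases x with rfl | ⟨n, m, rfl⟩
        · exact absurd hx hap
        · exact Set.mem_iUnion.mpr ⟨n, hdD n m⟩
      · intro i
        have hopen : IsOpen (Zᶜ) := hZ.isOpen_compl
        have hfin : {m | SeqFan.pt i m ∈ Z}.Finite := by
          have := (seqFan_isOpen_iff.mp hopen) hap i
          simpa using this
        refine (hfin.image (d i)).subset ?_
        rintro y ⟨⟨x, hx, rfl⟩, hyD⟩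
        rcases SeqFan.cases x with rfl | ⟨n, m, rfl⟩
        · exact absurd hx hap
        · have hni : n = i := by
            by_contra hne
            exact hD'disj i n (fun h => hne h.symm) _ hyD (hdD n m)
          subst hni
          exact ⟨m, hx, rfl⟩
  set ψ' : SeqFan → ↥F := fun x => ⟨ψ x, hψF x⟩ with hψ'def
  have hψ'bij : Function.Bijective ψ' := by
    constructor
    · intro a b hab
      exact hψinj (congrArg Subtype.val hab)
    · rintro ⟨y, hy⟩
      obtain ⟨x, hx⟩ := hψsurj y hy
      exact ⟨x, Subtype.ext hx⟩
  set eqv : SeqFan ≃ ↥F := Equiv.ofBijective ψ' hψ'bij with heqvdef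
  have hcont1 : Continuous eqv := hψcont.subtype_mk hψF
  have hcont2 : Continuous eqv.symm := by
    rw [continuous_iff_isClosed]
    intro Z hZ
    rw [← Equiv.image_eq_preimage_symm]
    have himg : eqv '' Z = Subtype.val ⁻¹' (ψ '' Z) := by
      ext ⟨y, hy⟩
      simp only [Set.mem_image, Set.mem_preimage]
      constructor
      · rintro ⟨x, hx, hxe⟩
        exact ⟨x, hx, congrArg Subtype.val hxe⟩
      · rintro ⟨x, hx, hxy⟩
        exact ⟨x, hx, Subtype.ext hxy⟩
    rw [himg]
    exact (hclosedim Z hZ).preimage continuous_subtype_val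
  exact ⟨F, hclosed1 F subset_rfl (Set.mem_union_left _ rfl), ⟨⟨eqv, hcont1, hcont2⟩⟩⟩

end St18


/-- a countable sequential topological group is Fréchet iff it
contains no closed copy of the sequential fan `S(ω)`. -/
theorem statement18 (G : Type*) [Group G] [TopologicalSpace G] [IsTopologicalGroup G]
    [T1Space G] [Countable G] [SequentialSpace G] :
    FrechetUrysohnSpace G ↔ ¬ ∃ S : Set G, IsClosed S ∧ Nonempty (SeqFan ≃ₜ ↥S) := by
  constructor
  · intro hFUS
    rintro ⟨S, _hScl, ⟨e⟩⟩
    haveI := hFUS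
    exact St18.no_fan_of_fus G S e
  · intro hno
    by_contra hFUS
    exact hno (St18.fan_of_not_fus G hFUS)
end
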